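/- arXiv:0812.1374 — 3 statements merged into one kernel-verified Lean document; each statement's English description precedes it below -/
import Mathlib

section
/- For 0 < α ≤ 1, arbitrary x > 0, and complex s with Re(s) > 0 and s ≠ 1, the Hurwitz zeta function satisfies ζ(s,α) - x^{1-s}/(s-1) = ∑_{0 ≤ n ≤ x-α} (n+α)^{-s} + ψ(x-α)·x^{-s} - s·∫_x^∞ ψ(u-α)/u^{s+1} du, where ψ(u) = u - ⌊u⌋ - 1/2. -/
open Complex MeasureTheory

/-- The sawtooth function `ψ(u) = u - ⌊u⌋ - 1/2`. -/
noncomputable def saw (u : ℝ) : ℝ := u - ⌊u⌋ - 1/2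

open Set Filter

variable {x : ℝ} {s : ℂ} {α : ℝ}

lemma measurable_saw : Measurable saw := by
  have h : saw = fun u => Int.fract u - 1/2 :=
    funext fun u => by rw [Int.fract]; unfold saw; ring
  rw [h]; exact measurable_fract.sub measurable_const

lemma abs_saw_le (t : ℝ) : |saw t| ≤ 1 := by
  have h1 := Int.fract_nonneg t
  have h2 := Int.fract_lt_one t
  have h : saw t = Int.fract t - 1/2 := by rw [Int.fract]; unfold saw; ring
  rw [h, abs_le]; constructor <;> [linarith; linarith]

lemma cpow_meas (e : ℂ) : Measurable (fun u : ℝ => (u:ℂ) ^ e) :=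
  Complex.measurable_ofReal.pow measurable_const

lemma norm_cpow_of_pos {u : ℝ} (hu : 0 < u) (e : ℂ) : ‖(u:ℂ) ^ e‖ = u ^ e.re := by
  rw [Complex.norm_cpow_eq_rpow_re_of_pos hu]

lemma integrableOn_saw_mul (hx : 0 < x) (hs : 0 < s.re) :
    IntegrableOn (fun u : ℝ => (saw (u-α) : ℂ) * (u:ℂ) ^ (-(s+1))) (Ioi x) := by
  have hmeas : AEStronglyMeasurable (fun u : ℝ => (saw (u-α) : ℂ) * (u:ℂ) ^ (-(s+1)))
      (volume.restrict (Ioi x)) :=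
    ((Complex.measurable_ofReal.comp (measurable_saw.comp
      (measurable_id.sub measurable_const))).mul (cpow_meas _)).aestronglyMeasurable
  refine Integrable.mono' (g := fun u : ℝ => u ^ (-(s.re) - 1))
    (integrableOn_Ioi_rpow_of_lt (by linarith) hx) hmeas ?_
  rw [ae_restrict_iff' measurableSet_Ioi]
  filter_upwards with u hu
  have hu0 : 0 < u := hx.trans hu
  rw [norm_mul, norm_cpow_of_pos hu0]
  have h1 : ‖((saw (u-α) : ℝ) : ℂ)‖ ≤ 1 := by
    rw [Complex.norm_real]; exact abs_saw_le _
  have h2 : (-(s+1)).re = -s.re - 1 := by simp [Complex.neg_re, Complex.add_re]; ring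
  rw [h2]
  calc ‖((saw (u-α) : ℝ) : ℂ)‖ * u ^ (-s.re - 1) ≤ 1 * u ^ (-s.re - 1) :=
        mul_le_mul_of_nonneg_right h1 (Real.rpow_nonneg hu0.le _)
    _ = u ^ (-s.re - 1) := one_mul _

lemma Ici_inter_Ioi_ae (a x : ℝ) : (Ici a ∩ Ioi x : Set ℝ) =ᵐ[volume] Ioi (max a x) := by
  rw [MeasureTheory.ae_eq_set]
  constructor
  · refine measure_mono_null ?_ (measure_singleton a)
    rintro u ⟨⟨h1, h2⟩, h3⟩
    simp only [mem_Ioi, not_lt] at h3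
    rcases le_or_gt a x with h | h
    · exact absurd h2 (not_lt.mpr (h3.trans (max_eq_right h).le))
    · have : u ≤ a := h3.trans (max_eq_left h.le).le
      simp [le_antisymm this h1]
  · have hsub : Ioi (max a x) ⊆ Ici a ∩ Ioi x := fun u hu =>
      ⟨((le_max_left a x).trans_lt hu).le, (le_max_right a x).trans_lt hu⟩
    rw [Set.diff_eq_empty.mpr hsub]; simp

lemma norm_term (hα : 0 < α) (e : ℂ) (n : ℕ) :
    ‖((n:ℂ) + α) ^ e‖ = ((n:ℝ) + α) ^ e.re := by
  have : ((n:ℂ) + (α:ℂ)) = (((n:ℝ) + α : ℝ) : ℂ) := by push_cast; ring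
  rw [this, norm_cpow_of_pos (by positivity)]

lemma summable_term (hα : 0 < α) (hs : 1 < s.re) :
    Summable (fun n : ℕ => ((n:ℝ) + α) ^ (-s.re)) := by
  rw [← summable_nat_add_iff (f := fun n : ℕ => ((n:ℝ) + α) ^ (-s.re)) 1]
  have h0 := (Real.summable_one_div_nat_rpow (p := s.re)).mpr hs
  have h := (summable_nat_add_iff (f := fun n : ℕ => (1:ℝ)/(n:ℝ) ^ s.re) 1).mpr h0
  refine Summable.of_nonneg_of_le (fun n => by positivity) (fun n => ?_) h
  have h1 : (1:ℝ) / (((n:ℕ) + 1 : ℕ):ℝ) ^ s.re = ((n:ℝ) + 1) ^ (-s.re) := by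
    push_cast
    rw [Real.rpow_neg (by positivity), one_div]
  simp only [h1]
  push_cast
  exact Real.rpow_le_rpow_of_nonpos (by positivity) (by linarith) (by linarith)

lemma integral_cpow_eval {c : ℝ} (hc : 0 < c) (hs : 0 < s.re) :
    ∫ u in Ioi c, (u:ℂ) ^ (-(s+1)) = (c:ℂ) ^ (-s) / s := by
  have h : (-(s+1)).re < -1 := by
    simp only [Complex.neg_re, Complex.add_re, Complex.one_re]; linarith
  rw [integral_Ioi_cpow_of_lt h hc, show -(s+1) + 1 = -s by ring, neg_div_neg_eq]

lemma floor_integral (hα : 0 < α) (hα1 : α ≤ 1) (hx : 0 < x) (hs : 1 < s.re) :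
    ∫ u in Ioi x, ((⌊u - α⌋ + 1 : ℤ) : ℂ) * (u:ℂ) ^ (-(s+1))
      = ∑' n : ℕ, ((max x ((n:ℝ) + α) : ℝ) : ℂ) ^ (-s) / s := by
  have hs0 : 0 < s.re := by linarith
  set g : ℝ → ℂ := fun u => (u:ℂ) ^ (-(s+1)) with hg
  set F : ℕ → ℝ → ℂ := fun n => (Ici ((n:ℝ) + α)).indicator g with hF
  have hge : ∀ n : ℕ, (0:ℝ) < max x ((n:ℝ)+α) := fun n => lt_max_of_lt_left hx
  have hgint : IntegrableOn g (Ioi x) := integrableOn_Ioi_cpow_of_lt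
    (by simp only [Complex.neg_re, Complex.add_re, Complex.one_re]; linarith) hx
  have hFint : ∀ n, Integrable (F n) (volume.restrict (Ioi x)) :=
    fun n => hgint.indicator measurableSet_Ici
  have hFval : ∀ n : ℕ, ∫ u in Ioi x, F n u = ((max x ((n:ℝ)+α) : ℝ) : ℂ) ^ (-s) / s := by
    intro n
    have e1 : ∫ u in Ioi x, F n u = ∫ u in (Ici ((n:ℝ)+α) ∩ Ioi x), g u := by
      rw [hF]
      rw [integral_indicator measurableSet_Ici, Measure.restrict_restrict measurableSet_Ici]
    rw [e1, setIntegral_congr_set (Ici_inter_Ioi_ae _ _), max_comm]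
    exact integral_cpow_eval (hge n) hs0
  have hnormval : ∀ n : ℕ, ∫ u in Ioi x, ‖F n u‖
      = (max x ((n:ℝ)+α)) ^ (-s.re - 1 + 1) / (-(-s.re - 1 + 1)) := by
    intro n
    have e1 : ∫ u in Ioi x, ‖F n u‖ = ∫ u in (Ici ((n:ℝ)+α) ∩ Ioi x), ‖g u‖ := by
      simp only [norm_indicator_eq_indicator_norm, hF]
      rw [integral_indicator measurableSet_Ici, Measure.restrict_restrict measurableSet_Ici]
    rw [e1, setIntegral_congr_set (Ici_inter_Ioi_ae _ _), max_comm]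
    have e2 : ∫ u in Ioi (max x ((n:ℝ)+α)), ‖g u‖
        = ∫ u in Ioi (max x ((n:ℝ)+α)), u ^ (-s.re - 1) := by
      refine setIntegral_congr_fun measurableSet_Ioi (fun u hu => ?_)
      have hu0 : (0:ℝ) < u := (hge n).trans hu
      rw [hg, norm_cpow_of_pos hu0]
      norm_num
      rw [show (-1 : ℝ) + -s.re = -s.re - 1 by ring]
    rw [e2, integral_Ioi_rpow_of_lt (by linarith) (hge n), neg_div, ← div_neg]
  have hsummable : Summable (fun n : ℕ => ∫ u in Ioi x, ‖F n u‖) := by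
    simp only [hnormval]
    apply Summable.div_const
    refine Summable.of_nonneg_of_le (fun n => by positivity) (fun n => ?_) (summable_term hα hs)
    have : -s.re - 1 + 1 = -s.re := by ring
    rw [this]
    exact Real.rpow_le_rpow_of_nonpos (by positivity) (le_max_right _ _) (by linarith)
  have hpt : ∀ u ∈ Ioi x, ∑' n, F n u = ((⌊u - α⌋ + 1 : ℤ) : ℂ) * g u := by
    intro u hu
    have hu0 : 0 < u := hx.trans hu
    have hfl : (-1 : ℤ) ≤ ⌊u - α⌋ := by
      rw [Int.le_floor]; push_cast; linarith
    set m : ℕ := (⌊u - α⌋ + 1).toNat with hm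
    have hmz : (m : ℤ) = ⌊u - α⌋ + 1 := Int.toNat_of_nonneg (by omega)
    have hsupp : ∀ n : ℕ, n ∉ Finset.range m → F n u = 0 := by
      intro n hn
      rw [Finset.mem_range, not_lt] at hn
      apply indicator_of_notMem
      simp only [mem_Ici, not_le]
      have h1 : (u - α) < (⌊u - α⌋ : ℝ) + 1 := Int.lt_floor_add_one _
      have h2' : (⌊u-α⌋ + 1 : ℤ) ≤ (n:ℤ) := by rw [← hmz]; exact_mod_cast hn
      have h2 : ((⌊u - α⌋ : ℝ) + 1) ≤ (n:ℝ) := by exact_mod_cast h2'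
      linarith
    rw [tsum_eq_sum hsupp]
    have hval : ∀ n ∈ Finset.range m, F n u = g u := by
      intro n hn
      rw [Finset.mem_range] at hn
      apply indicator_of_mem
      rw [mem_Ici]
      have h1' : (n : ℤ) ≤ ⌊u - α⌋ := by omega
      have h1 : (n : ℝ) ≤ (⌊u - α⌋ : ℝ) := by exact_mod_cast h1'
      have h2 : (⌊u - α⌋ : ℝ) ≤ u - α := Int.floor_le _
      linarith
    rw [Finset.sum_congr rfl hval, Finset.sum_const, Finset.card_range, nsmul_eq_mul]
    congr 1
    rw [show ((m:ℂ)) = ((m:ℤ) : ℂ) by push_cast; ring, hmz]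
  calc ∫ u in Ioi x, ((⌊u - α⌋ + 1 : ℤ) : ℂ) * (u:ℂ) ^ (-(s+1))
      = ∫ u in Ioi x, ∑' n, F n u :=
        (setIntegral_congr_fun measurableSet_Ioi (fun u hu => (hpt u hu).symm))
    _ = ∑' n, ∫ u in Ioi x, F n u :=
        (integral_tsum_of_summable_integral_norm hFint hsummable).symm
    _ = ∑' n : ℕ, ((max x ((n:ℝ) + α) : ℝ) : ℂ) ^ (-s) / s := by simp only [hFval]

lemma s_mul_integral_cpow (hx : 0 < x) (hs : 0 < s.re) (hs0 : s ≠ 0) :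
    s * ∫ u in Ioi x, (u:ℂ) ^ (-(s+1)) = (x:ℂ) ^ (-s) := by
  rw [integral_cpow_eval hx hs, mul_div_cancel₀ _ hs0]

lemma integral_cpow_Ioi (hx : 0 < x) (hs : 1 < s.re) :
    ∫ u in Ioi x, (u:ℂ) ^ (-s) = (x:ℂ) ^ (1-s) / (s-1) := by
  have h : (-s).re < -1 := by simp only [Complex.neg_re]; linarith
  rw [integral_Ioi_cpow_of_lt h hx]
  rw [show -s + 1 = 1 - s by ring, show (1:ℂ) - s = -(s-1) by ring, neg_div_neg_eq]

lemma summable_max_cpow (hα : 0 < α) (hx : 0 < x) (hs : 1 < s.re) :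
    Summable (fun n : ℕ => ((max x ((n:ℝ) + α) : ℝ) : ℂ) ^ (-s)) := by
  apply Summable.of_norm
  have hge : ∀ n : ℕ, (0:ℝ) < max x ((n:ℝ)+α) := fun n => lt_max_of_lt_left hx
  have h : ∀ n : ℕ, ‖((max x ((n:ℝ) + α) : ℝ) : ℂ) ^ (-s)‖
      = (max x ((n:ℝ)+α)) ^ (-s.re) := by
    intro n
    rw [norm_cpow_of_pos (hge n), Complex.neg_re]
  simp only [h]
  refine Summable.of_nonneg_of_le (fun n => by positivity) (fun n => ?_) (summable_term hα hs)
  exact Real.rpow_le_rpow_of_nonpos (by positivity) (le_max_right _ _) (by linarith)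

lemma summable_term_cpow (hα : 0 < α) (hs : 1 < s.re) :
    Summable (fun n : ℕ => ((n:ℂ) + α) ^ (-s)) := by
  apply Summable.of_norm
  have h : ∀ n : ℕ, ‖((n:ℂ) + α) ^ (-s)‖ = ((n:ℝ) + α) ^ (-s.re) := by
    intro n
    rw [norm_term hα, Complex.neg_re]
  simp only [h]
  exact summable_term hα hs

lemma finset_eq (hα1 : α ≤ 1) (hx : 0 < x) :
    (Finset.range (⌊x - α⌋₊ + 1)).filter (fun n : ℕ => (n : ℝ) ≤ x - α)
      = Finset.range (⌊x - α⌋ + 1).toNat := by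
  have hfl : (-1 : ℤ) ≤ ⌊x - α⌋ := by rw [Int.le_floor]; push_cast; linarith
  have hmz : ((⌊x - α⌋ + 1).toNat : ℤ) = ⌊x - α⌋ + 1 := Int.toNat_of_nonneg (by omega)
  ext n
  simp only [Finset.mem_filter, Finset.mem_range]
  constructor
  · rintro ⟨h1, h2⟩
    have h3 : (n:ℤ) ≤ ⌊x - α⌋ := Int.le_floor.mpr (by exact_mod_cast h2)
    omega
  · intro h1
    have h2 : (n:ℤ) ≤ ⌊x - α⌋ := by omega
    have h3 : (n:ℝ) ≤ (⌊x - α⌋ : ℝ) := by exact_mod_cast h2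
    have h4 : (n:ℝ) ≤ x - α := h3.trans (Int.floor_le _)
    exact ⟨Nat.lt_succ_of_le (Nat.le_floor h4), h4⟩

lemma stmt2_of_lt (α : ℝ) (hα : 0 < α) (hα1 : α ≤ 1) (x : ℝ) (hx : 0 < x)
    (s : ℂ) (hs : 1 < s.re) :
    HurwitzZeta.hurwitzZeta (α : UnitAddCircle) s - (x : ℂ) ^ (1 - s) / (s - 1) =
      (∑ n ∈ (Finset.range (⌊x - α⌋₊ + 1)).filter (fun n : ℕ => (n : ℝ) ≤ x - α),
        ((n : ℂ) + (α : ℂ)) ^ (-s))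
      + (saw (x - α) : ℂ) * (x : ℂ) ^ (-s)
      - s * ∫ u in Set.Ioi x, (saw (u - α) : ℂ) / (u : ℂ) ^ (s + 1) := by
  have hs0 : 0 < s.re := by linarith
  have hsne : s ≠ 0 := fun h => by rw [h] at hs0; simp at hs0
  have hs1ne : s - 1 ≠ 0 := by
    intro h
    rw [sub_eq_zero] at h
    rw [h] at hs
    simp at hs
  -- N
  have hfl : (-1 : ℤ) ≤ ⌊x - α⌋ := by rw [Int.le_floor]; push_cast; linarith
  set N : ℕ := (⌊x - α⌋ + 1).toNat with hN
  have hmz : (N : ℤ) = ⌊x - α⌋ + 1 := Int.toNat_of_nonneg (by omega)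
  have hmr : (N : ℝ) = (⌊x - α⌋ : ℝ) + 1 := by exact_mod_cast hmz
  have hNr : x - α < (N : ℝ) := by rw [hmr]; exact Int.lt_floor_add_one _
  -- replace division by multiplication in the integral
  have hdivmul : ∫ u in Ioi x, (saw (u - α) : ℂ) / (u : ℂ) ^ (s + 1)
      = ∫ u in Ioi x, (saw (u - α) : ℂ) * (u:ℂ) ^ (-(s+1)) := by
    refine setIntegral_congr_fun measurableSet_Ioi (fun u hu => ?_)
    rw [Complex.cpow_neg, div_eq_mul_inv]
  -- integrable pieces
  have hIa : IntegrableOn (fun u : ℝ => (u:ℂ) ^ (-s)) (Ioi x) :=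
    integrableOn_Ioi_cpow_of_lt (by simp only [Complex.neg_re]; linarith) hx
  have hIb : IntegrableOn (fun u : ℝ => (u:ℂ) ^ (-(s+1))) (Ioi x) :=
    integrableOn_Ioi_cpow_of_lt
      (by simp only [Complex.neg_re, Complex.add_re, Complex.one_re]; linarith) hx
  have hIc : IntegrableOn (fun u : ℝ => (saw (u-α) : ℂ) * (u:ℂ) ^ (-(s+1))) (Ioi x) :=
    integrableOn_saw_mul hx hs0
  -- pointwise decomposition of the floor integrand
  have hkey : ∀ u ∈ Ioi x, ((⌊u - α⌋ + 1 : ℤ) : ℂ) * (u:ℂ) ^ (-(s+1))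
      = (u:ℂ) ^ (-s) + ((1:ℂ)/2 - α) * (u:ℂ) ^ (-(s+1))
        - (saw (u-α) : ℂ) * (u:ℂ) ^ (-(s+1)) := by
    intro u hu
    have hu0 : 0 < u := hx.trans hu
    have hcoef : ((⌊u - α⌋ + 1 : ℤ) : ℂ) = (u:ℂ) + ((1:ℂ)/2 - α) - (saw (u-α) : ℂ) := by
      have hr : ((⌊u - α⌋ : ℤ) : ℝ) + 1 = u + (1/2 - α) - saw (u-α) := by
        unfold saw; ring
      calc ((⌊u - α⌋ + 1 : ℤ) : ℂ) = ((((⌊u - α⌋ : ℤ) : ℝ) + 1 : ℝ) : ℂ) := by push_cast; ring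
        _ = ((u + (1/2 - α) - saw (u-α) : ℝ) : ℂ) := by rw [hr]
        _ = (u:ℂ) + ((1:ℂ)/2 - α) - (saw (u-α) : ℂ) := by push_cast; ring
    rw [hcoef]
    have hpow : (u:ℂ) ^ (-s) = (u:ℂ) * (u:ℂ) ^ (-(s+1)) := by
      rw [show -s = 1 + -(s+1) by ring,
        Complex.cpow_add _ _ (Complex.ofReal_ne_zero.mpr hu0.ne'), Complex.cpow_one]
    rw [hpow]; ring
  -- evaluate the floor integral two ways
  have hE1 : ∫ u in Ioi x, ((⌊u - α⌋ + 1 : ℤ) : ℂ) * (u:ℂ) ^ (-(s+1))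
      = (x:ℂ) ^ (1-s) / (s-1) + ((1:ℂ)/2 - α) * ((x:ℂ) ^ (-s) / s)
        - ∫ u in Ioi x, (saw (u-α) : ℂ) * (u:ℂ) ^ (-(s+1)) := by
    rw [setIntegral_congr_fun measurableSet_Ioi hkey]
    calc ∫ u in Ioi x, ((u:ℂ) ^ (-s) + ((1:ℂ)/2 - α) * (u:ℂ) ^ (-(s+1))
            - (saw (u-α) : ℂ) * (u:ℂ) ^ (-(s+1)))
        = (∫ u in Ioi x, ((u:ℂ) ^ (-s) + ((1:ℂ)/2 - α) * (u:ℂ) ^ (-(s+1))))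
            - ∫ u in Ioi x, (saw (u-α) : ℂ) * (u:ℂ) ^ (-(s+1)) :=
          integral_sub (hIa.add (hIb.const_mul _)) hIc
      _ = ((∫ u in Ioi x, (u:ℂ) ^ (-s))
            + ((1:ℂ)/2 - α) * ∫ u in Ioi x, (u:ℂ) ^ (-(s+1)))
            - ∫ u in Ioi x, (saw (u-α) : ℂ) * (u:ℂ) ^ (-(s+1)) := by
          rw [integral_add hIa (hIb.const_mul _), integral_const_mul]
      _ = (x:ℂ) ^ (1-s) / (s-1) + ((1:ℂ)/2 - α) * ((x:ℂ) ^ (-s) / s)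
            - ∫ u in Ioi x, (saw (u-α) : ℂ) * (u:ℂ) ^ (-(s+1)) := by
          rw [integral_cpow_Ioi hx hs, integral_cpow_eval hx hs0]
  -- the tsum side
  have hζ : HasSum (fun n : ℕ => ((n:ℂ) + α) ^ (-s))
      (HurwitzZeta.hurwitzZeta (α : UnitAddCircle) s) := by
    have h := HurwitzZeta.hasSum_hurwitzZeta_of_one_lt_re ⟨hα.le, hα1⟩ hs
    refine h.congr_fun (fun n => ?_)
    rw [Complex.cpow_neg, one_div]
  have hsum1 : Summable (fun n : ℕ => ((max x ((n:ℝ) + α) : ℝ) : ℂ) ^ (-s)) :=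
    summable_max_cpow hα hx hs
  have hsplit1 : (∑ i ∈ Finset.range N, ((max x ((i:ℝ) + α) : ℝ) : ℂ) ^ (-s))
      + ∑' i : ℕ, ((max x (((i+N:ℕ):ℝ) + α) : ℝ) : ℂ) ^ (-s)
      = ∑' n : ℕ, ((max x ((n:ℝ) + α) : ℝ) : ℂ) ^ (-s) := Summable.sum_add_tsum_nat_add N hsum1
  have hsplit2 : (∑ i ∈ Finset.range N, ((i:ℂ) + α) ^ (-s))
      + ∑' i : ℕ, (((i+N:ℕ):ℂ) + α) ^ (-s)
      = ∑' n : ℕ, ((n:ℂ) + α) ^ (-s) := Summable.sum_add_tsum_nat_add N (summable_term_cpow hα hs)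
  -- max elimination
  have hmax1 : ∀ i ∈ Finset.range N, ((max x ((i:ℝ) + α) : ℝ) : ℂ) ^ (-s) = (x:ℂ) ^ (-s) := by
    intro i hi
    rw [Finset.mem_range] at hi
    have h1 : (i:ℤ) ≤ ⌊x - α⌋ := by omega
    have h2 : (i:ℝ) ≤ (⌊x - α⌋:ℝ) := by exact_mod_cast h1
    have : (i:ℝ) + α ≤ x := by have := Int.floor_le (x - α); linarith
    rw [max_eq_left this]
  have hmax2 : ∀ i : ℕ, ((max x (((i+N:ℕ):ℝ) + α) : ℝ) : ℂ) ^ (-s) = (((i+N:ℕ):ℂ) + α) ^ (-s) := by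
    intro i
    have h1 : x ≤ ((i+N:ℕ):ℝ) + α := by push_cast; linarith [Nat.cast_nonneg (α := ℝ) i]
    rw [max_eq_right h1]
    congr 1
    push_cast
    ring
  -- assemble the tsum identity
  have e1 : (∑' n : ℕ, ((max x ((n:ℝ) + α) : ℝ) : ℂ) ^ (-s))
      = (N:ℂ) * (x:ℂ)^(-s) + (HurwitzZeta.hurwitzZeta (α : UnitAddCircle) s
          - ∑ i ∈ Finset.range N, ((i:ℂ) + α) ^ (-s)) := by
    rw [← hsplit1]
    congr 1
    · rw [Finset.sum_congr rfl hmax1, Finset.sum_const, Finset.card_range, nsmul_eq_mul]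
    · rw [tsum_congr hmax2, ← hζ.tsum_eq, ← hsplit2]
      ring
  -- multiply the integral identity by s
  have e2 := floor_integral hα hα1 hx hs
  have e2' : s * ∫ u in Ioi x, ((⌊u - α⌋ + 1 : ℤ) : ℂ) * (u:ℂ) ^ (-(s+1))
      = ∑' n : ℕ, ((max x ((n:ℝ) + α) : ℝ) : ℂ) ^ (-s) := by
    rw [e2, tsum_div_const, mul_div_cancel₀ _ hsne]
  have e5 : (∑' n : ℕ, ((max x ((n:ℝ) + α) : ℝ) : ℂ) ^ (-s))
      = s * ((x:ℂ) ^ (1-s) / (s-1)) + ((1:ℂ)/2 - α) * (x:ℂ)^(-s)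
        - s * ∫ u in Ioi x, (saw (u-α) : ℂ) * (u:ℂ) ^ (-(s+1)) := by
    rw [← e2', hE1]
    field_simp
  have hX1 : s * ((x:ℂ)^(1-s)/(s-1)) - (x:ℂ)^(1-s)/(s-1) = (x:ℂ) * (x:ℂ)^(-s) := by
    have h1 : s * ((x:ℂ)^(1-s)/(s-1)) - (x:ℂ)^(1-s)/(s-1)
        = (x:ℂ)^(1-s)/(s-1) * (s-1) := by ring
    rw [h1, div_mul_cancel₀ _ hs1ne, show (1:ℂ) - s = 1 + -s by ring,
      Complex.cpow_add _ _ (Complex.ofReal_ne_zero.mpr hx.ne'), Complex.cpow_one]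
  have hsawc : (saw (x - α) : ℂ) = (x:ℂ) - α + 1/2 - N := by
    have hr : saw (x - α) = x - α + 1/2 - (N:ℝ) := by
      rw [hmr]; unfold saw; ring
    rw [hr]; push_cast; ring
  rw [hdivmul, finset_eq hα1 hx, ← hN]
  linear_combination (-1 : ℂ) * e1 + e5 + hX1 - (x:ℂ)^(-s) * hsawc

lemma integrable_log_rpow (hx : 0 < x) {a : ℝ} (ha : 0 < a) :
    IntegrableOn (fun u : ℝ => |Real.log u| * u ^ (-a - 1)) (Ioi x) := by
  set M := max x 1 with hM
  have hM1 : (1:ℝ) ≤ M := le_max_right _ _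
  have hxM : x ≤ M := le_max_left _ _
  have hmeas : Measurable (fun u : ℝ => |Real.log u| * u ^ (-a - 1)) :=
    Real.measurable_log.abs.mul (measurable_id.pow_const _)
  have h1 : IntegrableOn (fun u : ℝ => |Real.log u| * u ^ (-a - 1)) (Ioc x M) := by
    refine (ContinuousOn.integrableOn_Icc ?_).mono Ioc_subset_Icc_self le_rfl
    refine ContinuousOn.mul (ContinuousOn.abs ?_) ?_
    · exact Real.continuousOn_log.mono (fun u hu => by
        simp only [mem_compl_iff, mem_singleton_iff]
        exact (hx.trans_le hu.1).ne')
    · intro u hu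
      exact (Real.continuousAt_rpow_const u _ (Or.inl (hx.trans_le hu.1).ne')).continuousWithinAt
  have h2 : IntegrableOn (fun u : ℝ => |Real.log u| * u ^ (-a - 1)) (Ioi M) := by
    refine Integrable.mono' (g := fun u : ℝ => (2/a) * u ^ (-(a/2) - 1))
      ((integrableOn_Ioi_rpow_of_lt (by linarith) (lt_of_lt_of_le hx hxM)).const_mul _)
      hmeas.aestronglyMeasurable ?_
    rw [ae_restrict_iff' measurableSet_Ioi]
    filter_upwards with u hu
    have hu1 : (1:ℝ) < u := lt_of_le_of_lt hM1 hu
    have hu0 : (0:ℝ) < u := lt_trans zero_lt_one hu1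
    have hlog : |Real.log u| = Real.log u := abs_of_nonneg (Real.log_nonneg hu1.le)
    have hb : Real.log u ≤ u ^ (a/2) / (a/2) := Real.log_le_rpow_div hu0.le (by linarith)
    have hnn : (0:ℝ) ≤ u ^ (-a - 1) := Real.rpow_nonneg hu0.le _
    rw [Real.norm_eq_abs, abs_mul, _root_.abs_abs, _root_.abs_of_nonneg hnn, hlog]
    calc Real.log u * u ^ (-a - 1) ≤ (u ^ (a/2) / (a/2)) * u ^ (-a - 1) :=
          mul_le_mul_of_nonneg_right hb hnn
      _ = (2/a) * u ^ (-(a/2) - 1) := by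
          rw [div_mul_eq_mul_div, ← Real.rpow_add hu0,
            show a/2 + (-a - 1) = -(a/2) - 1 by ring, div_eq_mul_inv, mul_comm]
          congr 1
          rw [inv_div]
  have hunion : Ioi x = Ioc x M ∪ Ioi M := (Ioc_union_Ioi_eq_Ioi hxM).symm
  rw [hunion]
  exact h1.union h2

set_option maxHeartbeats 1000000 in
lemma diff_I (hx : 0 < x) :
    DifferentiableOn ℂ (fun z : ℂ => ∫ u in Ioi x, (saw (u - α) : ℂ) * (u:ℂ) ^ (-(z+1)))
      {z : ℂ | 0 < z.re} := by
  intro s₀ hs₀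
  simp only [mem_setOf_eq] at hs₀
  set σ := s₀.re with hσdef
  have hσ : 0 < σ := hs₀
  have hmeasF : ∀ z : ℂ, AEStronglyMeasurable
      (fun u : ℝ => (saw (u - α) : ℂ) * (u:ℂ) ^ (-(z+1))) (volume.restrict (Ioi x)) := fun z =>
    ((Complex.measurable_ofReal.comp (measurable_saw.comp
      (measurable_id.sub measurable_const))).mul (cpow_meas _)).aestronglyMeasurable
  have hmeasF' : AEStronglyMeasurable
      (fun u : ℝ => (saw (u - α) : ℂ) * ((u:ℂ) ^ (-(s₀+1)) * Complex.log u * (-1)))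
      (volume.restrict (Ioi x)) := by
    apply Measurable.aestronglyMeasurable
    exact (Complex.measurable_ofReal.comp (measurable_saw.comp
      (measurable_id.sub measurable_const))).mul
      (((cpow_meas _).mul Complex.measurable_ofReal.clog).mul measurable_const)
  have hbound_int : Integrable
      (fun u : ℝ => |Real.log u| * u ^ (-(σ/2) - 1) + |Real.log u| * u ^ (-(2*σ) - 1))
      (volume.restrict (Ioi x)) :=
    (integrable_log_rpow hx (by linarith)).add (integrable_log_rpow hx (by linarith))
  have h_bound : ∀ᵐ u ∂(volume.restrict (Ioi x)), ∀ z ∈ Metric.ball s₀ (σ/2),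
      ‖(saw (u - α) : ℂ) * ((u:ℂ) ^ (-(z+1)) * Complex.log u * (-1))‖
        ≤ |Real.log u| * u ^ (-(σ/2) - 1) + |Real.log u| * u ^ (-(2*σ) - 1) := by
    rw [ae_restrict_iff' measurableSet_Ioi]
    filter_upwards with u hu
    intro z hz
    have hu0 : 0 < u := hx.trans hu
    have hre : |z.re - σ| < σ/2 := by
      have h1 : dist z s₀ < σ/2 := Metric.mem_ball.mp hz
      rw [Complex.dist_eq] at h1
      calc |z.re - σ| = |(z - s₀).re| := by rw [Complex.sub_re]
        _ ≤ ‖z - s₀‖ := Complex.abs_re_le_norm _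
        _ < σ/2 := h1
    obtain ⟨hra, hrb⟩ := abs_lt.mp hre
    have hre1 : σ/2 < z.re := by linarith
    have hre2 : z.re < 2*σ := by linarith
    have hlogn : ‖Complex.log (u:ℂ)‖ = |Real.log u| := by
      rw [← Complex.ofReal_log hu0.le, Complex.norm_real, Real.norm_eq_abs]
    have hepow : ((-(z+1)).re) = -z.re - 1 := by
      simp only [Complex.neg_re, Complex.add_re, Complex.one_re]; ring
    have hpowle : u ^ (-z.re - 1) ≤ u ^ (-(σ/2) - 1) + u ^ (-(2*σ) - 1) := by
      rcases le_or_gt 1 u with h1 | h1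
      · refine le_add_of_le_of_nonneg ?_ (Real.rpow_nonneg hu0.le _)
        exact Real.rpow_le_rpow_of_exponent_le h1 (by linarith)
      · refine le_add_of_nonneg_of_le (Real.rpow_nonneg hu0.le _) ?_
        exact Real.rpow_le_rpow_of_exponent_ge hu0 h1.le (by linarith)
    calc ‖(saw (u - α) : ℂ) * ((u:ℂ) ^ (-(z+1)) * Complex.log u * (-1))‖
        = ‖((saw (u - α) : ℝ) : ℂ)‖ * (u ^ (-z.re - 1) * |Real.log u|) := by
          rw [norm_mul, norm_mul, norm_mul, norm_neg, norm_one, mul_one,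
            norm_cpow_of_pos hu0, hepow, hlogn]
      _ ≤ 1 * (( u ^ (-(σ/2) - 1) + u ^ (-(2*σ) - 1)) * |Real.log u|) := by
          refine mul_le_mul ?_ ?_ (by positivity) zero_le_one
          · rw [Complex.norm_real]; exact abs_saw_le _
          · exact mul_le_mul_of_nonneg_right hpowle (abs_nonneg _)
      _ = |Real.log u| * u ^ (-(σ/2) - 1) + |Real.log u| * u ^ (-(2*σ) - 1) := by ring
  have h_diff : ∀ᵐ u ∂(volume.restrict (Ioi x)), ∀ z ∈ Metric.ball s₀ (σ/2),
      HasDerivAt (fun z : ℂ => (saw (u - α) : ℂ) * (u:ℂ) ^ (-(z+1)))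
        ((saw (u - α) : ℂ) * ((u:ℂ) ^ (-(z+1)) * Complex.log u * (-1))) z := by
    rw [ae_restrict_iff' measurableSet_Ioi]
    filter_upwards with u hu
    intro z hz
    have hu0 : 0 < u := hx.trans hu
    have h1 : HasDerivAt (fun z : ℂ => -(z+1)) (-1) z := ((hasDerivAt_id z).add_const 1).neg
    have h2 := HasDerivAt.const_cpow (c := (u:ℂ)) h1 (Or.inl (Complex.ofReal_ne_zero.mpr hu0.ne'))
    exact h2.const_mul _
  have key := hasDerivAt_integral_of_dominated_loc_of_deriv_le (Metric.ball_mem_nhds s₀ (by linarith : (0:ℝ) < σ/2))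
    (Filter.Eventually.of_forall hmeasF) (integrableOn_saw_mul hx hσ) hmeasF'
    h_bound hbound_int h_diff
  exact key.2.differentiableAt.differentiableWithinAt

lemma preconn : IsPreconnected {z : ℂ | 0 < z.re ∧ z ≠ 1} := by
  have hC : Convex ℝ {z : ℂ | 0 < z.re ∧ z.re < 1} :=
    (convex_halfSpace_re_gt 0).inter (convex_halfSpace_re_lt 1)
  have hD : Convex ℝ {z : ℂ | 1 < z.re} := convex_halfSpace_re_gt 1
  have hUp : Convex ℝ {z : ℂ | 0 < z.re ∧ 0 < z.im} :=
    (convex_halfSpace_re_gt 0).inter (convex_halfSpace_im_gt 0)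
  have hUm : Convex ℝ {z : ℂ | 0 < z.re ∧ z.im < 0} :=
    (convex_halfSpace_re_gt 0).inter (convex_halfSpace_im_lt 0)
  have hset : {z : ℂ | 0 < z.re ∧ z ≠ 1}
      = (({z : ℂ | 0 < z.re ∧ 0 < z.im} ∪ {z : ℂ | 0 < z.re ∧ z.re < 1})
          ∪ {z : ℂ | 1 < z.re}) ∪ {z : ℂ | 0 < z.re ∧ z.im < 0} := by
    ext z
    simp only [mem_setOf_eq, mem_union]
    constructor
    · rintro ⟨h1, h2⟩
      rcases lt_trichotomy z.re 1 with h | h | h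
      · exact Or.inl (Or.inl (Or.inr ⟨h1, h⟩))
      · rcases lt_trichotomy z.im 0 with h' | h' | h'
        · exact Or.inr ⟨h1, h'⟩
        · exact absurd (Complex.ext (by simpa using h) (by simpa using h')) h2
        · exact Or.inl (Or.inl (Or.inl ⟨h1, h'⟩))
      · exact Or.inl (Or.inr h)
    · rintro ((((⟨h1, h2⟩ | ⟨h1, h2⟩)) | h) | ⟨h1, h2⟩)
      · exact ⟨h1, fun h => by rw [h] at h2; simp at h2⟩
      · exact ⟨h1, fun h => by rw [h] at h2; simp at h2⟩
      · exact ⟨by linarith, fun hh => by rw [hh] at h; simp at h⟩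
      · exact ⟨h1, fun h => by rw [h] at h2; simp at h2⟩
  rw [hset]
  have p1 : IsPreconnected ({z : ℂ | 0 < z.re ∧ 0 < z.im} ∪ {z : ℂ | 0 < z.re ∧ z.re < 1}) := by
    apply IsPreconnected.union ((1/2 : ℂ) + Complex.I)
    · constructor <;> simp
    · constructor <;> norm_num
    · exact hUp.isPreconnected
    · exact hC.isPreconnected
  have p2 : IsPreconnected (({z : ℂ | 0 < z.re ∧ 0 < z.im} ∪ {z : ℂ | 0 < z.re ∧ z.re < 1})
      ∪ {z : ℂ | 1 < z.re}) := by
    apply IsPreconnected.union ((2 : ℂ) + Complex.I)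
    · left; constructor <;> simp
    · simp
    · exact p1
    · exact hD.isPreconnected
  apply IsPreconnected.union ((1/2 : ℂ) - Complex.I)
  · left; right; constructor <;> norm_num
  · constructor <;> norm_num
  · exact p2
  · exact hUm.isPreconnected

/-- For `0 < α ≤ 1`, `x > 0` and complex `s` with `Re s > 0`, `s ≠ 1`,
`ζ(s,α) - x^{1-s}/(s-1) = ∑_{0 ≤ n ≤ x-α} (n+α)^{-s} + ψ(x-α)·x^{-s}
  - s·∫_x^∞ ψ(u-α)/u^{s+1} du`. -/
theorem stmt2 (α : ℝ) (hα : 0 < α) (hα1 : α ≤ 1) (x : ℝ) (hx : 0 < x)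
    (s : ℂ) (hs : 0 < s.re) (hs1 : s ≠ 1) :
    HurwitzZeta.hurwitzZeta (α : UnitAddCircle) s - (x : ℂ) ^ (1 - s) / (s - 1) =
      (∑ n ∈ (Finset.range (⌊x - α⌋₊ + 1)).filter (fun n : ℕ => (n : ℝ) ≤ x - α),
        ((n : ℂ) + (α : ℂ)) ^ (-s))
      + (saw (x - α) : ℂ) * (x : ℂ) ^ (-s)
      - s * ∫ u in Set.Ioi x, (saw (u - α) : ℂ) / (u : ℂ) ^ (s + 1) := by
  have hIfun : ∀ z : ℂ, (∫ u in Ioi x, (saw (u - α) : ℂ) / (u:ℂ) ^ (z+1))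
      = ∫ u in Ioi x, (saw (u - α) : ℂ) * (u:ℂ) ^ (-(z+1)) := by
    intro z
    refine setIntegral_congr_fun measurableSet_Ioi (fun u hu => ?_)
    rw [Complex.cpow_neg, div_eq_mul_inv]
  set f : ℂ → ℂ := fun z =>
    HurwitzZeta.hurwitzZeta (α : UnitAddCircle) z - (x : ℂ) ^ (1 - z) / (z - 1) with hf
  set g : ℂ → ℂ := fun z =>
      (∑ n ∈ (Finset.range (⌊x - α⌋₊ + 1)).filter (fun n : ℕ => (n : ℝ) ≤ x - α),
        ((n : ℂ) + (α : ℂ)) ^ (-z))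
      + (saw (x - α) : ℂ) * (x : ℂ) ^ (-z)
      - z * ∫ u in Ioi x, (saw (u - α) : ℂ) * (u:ℂ) ^ (-(z+1)) with hg
  have hΩo : IsOpen {z : ℂ | 0 < z.re ∧ z ≠ 1} :=
    IsOpen.and (isOpen_lt continuous_const Complex.continuous_re) isOpen_ne
  have hfd : DifferentiableOn ℂ f {z : ℂ | 0 < z.re ∧ z ≠ 1} := by
    intro z hz
    have hz2 : z ≠ 1 := hz.2
    apply DifferentiableAt.differentiableWithinAt
    apply DifferentiableAt.sub
    · exact HurwitzZeta.differentiableAt_hurwitzZeta _ hz2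
    · exact DifferentiableAt.div
        (((differentiableAt_const (1:ℂ)).sub differentiableAt_id).const_cpow
          (Or.inl (Complex.ofReal_ne_zero.mpr hx.ne')))
        (differentiableAt_id.sub (differentiableAt_const 1))
        (sub_ne_zero.mpr hz2)
  have hne : ∀ n : ℕ, ((n:ℂ) + (α:ℂ)) ≠ 0 := by
    intro n h
    have h2 := congrArg Complex.re h
    simp only [Complex.add_re, Complex.natCast_re, Complex.ofReal_re, Complex.zero_re] at h2
    have : (0:ℝ) ≤ (n:ℝ) := Nat.cast_nonneg n
    linarith
  have hgd : DifferentiableOn ℂ g {z : ℂ | 0 < z.re ∧ z ≠ 1} := by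
    intro z hz
    apply DifferentiableAt.differentiableWithinAt
    have hI : DifferentiableAt ℂ
        (fun z : ℂ => ∫ u in Ioi x, (saw (u - α) : ℂ) * (u:ℂ) ^ (-(z+1))) z :=
      (diff_I hx).differentiableAt
        ((isOpen_lt continuous_const Complex.continuous_re).mem_nhds hz.1)
    refine DifferentiableAt.sub (DifferentiableAt.add ?_ ?_) (differentiableAt_id.mul hI)
    · refine DifferentiableAt.fun_sum (fun n _ => ?_)
      exact differentiableAt_id.neg.const_cpow (Or.inl (hne n))
    · exact (differentiableAt_id.neg.const_cpow
        (Or.inl (Complex.ofReal_ne_zero.mpr hx.ne'))).const_mul _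
  have h2m : (2:ℂ) ∈ {z : ℂ | 0 < z.re ∧ z ≠ 1} := by
    constructor
    · norm_num
    · intro h
      have := congrArg Complex.re h
      norm_num at this
  have hev : f =ᶠ[nhds (2:ℂ)] g := by
    have hmem : {z : ℂ | 1 < z.re} ∈ nhds (2:ℂ) :=
      (isOpen_lt continuous_const Complex.continuous_re).mem_nhds (by norm_num)
    filter_upwards [hmem] with z hz
    have := stmt2_of_lt α hα hα1 x hx z hz
    rw [hf, hg]
    simp only
    rw [← hIfun z]
    exact this
  have heq : Set.EqOn f g {z : ℂ | 0 < z.re ∧ z ≠ 1} :=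
    AnalyticOnNhd.eqOn_of_preconnected_of_eventuallyEq (hfd.analyticOnNhd hΩo)
      (hgd.analyticOnNhd hΩo) preconn h2m hev
  have hfin := heq (Set.mem_setOf.mpr ⟨hs, hs1⟩)
  rw [hf, hg] at hfin
  simp only at hfin
  rw [← hIfun s] at hfin
  exact hfin
end

section
/- For 0 < λ < 1 and 0 < α ≤ 1, the Lerch zeta function φ(λ,α,s) = ∑_{n≥0} e^{2πiλn}(n+α)^{-s} (defined for Re(s) > 1 and extended to an entire function of s) satisfies, for every integer r ≥ 1, the bound | φ^{(r)}(λ,α,1)/r! - (-1)^r (log α)^r/(r!·α) | ≪ (r^r e^{-r}/r!)·(1/λ + 1/(1-λ)), with an absolute implied constant. -/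
open Complex Filter Topology Real

lemma aux_log_le {t ε : ℝ} (ht : 1 ≤ t) (hε : 0 < ε) : Real.log t ≤ t ^ ε / ε := by
  have ht0 : 0 < t := lt_of_lt_of_le one_pos ht
  have h1 : Real.log (t ^ ε) = ε * Real.log t := Real.log_rpow ht0 ε
  have h2 : Real.log (t ^ ε) ≤ t ^ ε - 1 := Real.log_le_sub_one_of_pos (Real.rpow_pos_of_pos ht0 ε)
  have h3 : ε * Real.log t ≤ t ^ ε := by nlinarith [Real.rpow_pos_of_pos ht0 ε]
  rw [le_div_iff₀ hε]; linarith

lemma aux_log_le_div_e {x : ℝ} (hx : 0 < x) : Real.log x ≤ x / Real.exp 1 := by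
  have h := Real.log_le_sub_one_of_pos (x := x / Real.exp 1) (by positivity)
  rw [Real.log_div (ne_of_gt hx) (ne_of_gt (Real.exp_pos 1)), Real.log_exp] at h
  linarith

/-- Peak bound: for `t ≥ 1`, `σ ≥ 1`, `1 ≤ r`: `(log t)^r e^{-σ log t} ≤ r^r e^{-r}`. -/
lemma aux_peak {t σ : ℝ} {r : ℕ} (ht : 1 ≤ t) (hσ : 1 ≤ σ) (hr : 1 ≤ r) :
    (Real.log t) ^ r * Real.exp (-σ * Real.log t) ≤ (r : ℝ) ^ r * Real.exp (-(r : ℝ)) := by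
  have ht0 : 0 < t := lt_of_lt_of_le one_pos ht
  have hlt : 0 ≤ Real.log t := Real.log_nonneg ht
  have hr0 : 0 < (r : ℝ) := by exact_mod_cast hr
  -- log t ≤ r * t^(1/r) / e
  have h1 : Real.log t ≤ (r : ℝ) * t ^ ((r : ℝ)⁻¹) / Real.exp 1 := by
    have e1 : Real.log (t ^ ((r : ℝ)⁻¹)) = (r:ℝ)⁻¹ * Real.log t := Real.log_rpow ht0 _
    have e2 := aux_log_le_div_e (x := t ^ ((r : ℝ)⁻¹)) (by positivity)
    rw [e1] at e2
    calc Real.log t = (r : ℝ) * ((r:ℝ)⁻¹ * Real.log t) := by field_simp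
      _ ≤ (r : ℝ) * (t ^ ((r : ℝ)⁻¹) / Real.exp 1) := mul_le_mul_of_nonneg_left e2 hr0.le
      _ = (r : ℝ) * t ^ ((r : ℝ)⁻¹) / Real.exp 1 := by ring
  -- (log t)^r ≤ (r/e)^r * t
  have h2 : (Real.log t) ^ r ≤ ((r : ℝ) / Real.exp 1) ^ r * t := by
    have := pow_le_pow_left₀ hlt h1 r
    calc (Real.log t) ^ r ≤ ((r : ℝ) * t ^ ((r : ℝ)⁻¹) / Real.exp 1) ^ r := this
      _ = ((r : ℝ) / Real.exp 1) ^ r * (t ^ ((r : ℝ)⁻¹)) ^ r := by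
          rw [← mul_pow]; ring_nf
      _ = ((r : ℝ) / Real.exp 1) ^ r * t := by
          congr 1
          rw [← Real.rpow_natCast (t ^ ((r : ℝ)⁻¹)) r, ← Real.rpow_mul (le_of_lt ht0)]
          rw [inv_mul_cancel₀ (ne_of_gt hr0), Real.rpow_one]
  -- e^{-σ log t} = t^{-σ} ≤ t⁻¹
  have h3 : Real.exp (-σ * Real.log t) ≤ t⁻¹ := by
    rw [show -σ * Real.log t = Real.log t * (-σ) by ring, ← Real.rpow_def_of_pos ht0]
    calc t ^ (-σ) ≤ t ^ (-1 : ℝ) := Real.rpow_le_rpow_of_exponent_le ht (by linarith)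
      _ = t⁻¹ := by rw [Real.rpow_neg_one]
  have h4 : (Real.log t) ^ r * Real.exp (-σ * Real.log t) ≤ ((r : ℝ)/Real.exp 1) ^ r * t * t⁻¹ :=
    mul_le_mul h2 h3 (le_of_lt (Real.exp_pos _)) (by positivity)
  calc (Real.log t) ^ r * Real.exp (-σ * Real.log t) ≤ ((r : ℝ)/Real.exp 1) ^ r * t * t⁻¹ := h4
    _ = ((r : ℝ)/Real.exp 1) ^ r := by
        rw [mul_assoc, mul_inv_cancel₀ (ne_of_gt ht0), mul_one]
    _ = (r : ℝ) ^ r * Real.exp (-(r : ℝ)) := by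
        rw [div_pow, Real.exp_neg, ← Real.exp_nat_mul, mul_one, div_eq_mul_inv]

/-- Summability of `|log(n+α)|^k (n+α)^{-σ}` for `σ > 1`. -/
lemma aux_summable {α : ℝ} (hα : 0 < α) (k : ℕ) {σ : ℝ} (hσ : 1 < σ) :
    Summable (fun n : ℕ => |Real.log ((n : ℝ) + α)| ^ k * Real.exp (-σ * Real.log ((n : ℝ) + α))) := by
  rw [← summable_nat_add_iff 1]
  set ε : ℝ := (σ - 1) / (2 * (k + 1)) with hε
  have hε0 : 0 < ε := div_pos (by linarith) (by positivity)
  set τ : ℝ := (σ + 1) / 2 with hτ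
  have hτ1 : 1 < τ := by rw [hτ]; linarith
  have key : ∀ n : ℕ, |Real.log ((n + 1 : ℕ) + α)| ^ k * Real.exp (-σ * Real.log ((n + 1 : ℕ) + α))
      ≤ (ε⁻¹) ^ k * ((n + 1 : ℝ) + α) ^ (-τ) := by
    intro n
    set t : ℝ := (n + 1 : ℕ) + α with htdef
    have ht1 : 1 ≤ t := by
      rw [htdef]; push_cast; linarith [(Nat.cast_nonneg n : (0:ℝ) ≤ n)]
    have ht0 : 0 < t := lt_of_lt_of_le one_pos ht1
    have hlog : 0 ≤ Real.log t := Real.log_nonneg ht1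
    have h1 : |Real.log t| ^ k ≤ (ε⁻¹) ^ k * t ^ (ε * k) := by
      rw [_root_.abs_of_nonneg hlog]
      calc Real.log t ^ k ≤ (t ^ ε / ε) ^ k :=
            pow_le_pow_left₀ hlog (aux_log_le ht1 hε0) k
        _ = (ε⁻¹) ^ k * (t ^ ε) ^ k := by rw [div_pow]; ring
        _ = (ε⁻¹) ^ k * t ^ (ε * k) := by
            rw [← Real.rpow_natCast (t ^ ε) k, ← Real.rpow_mul ht0.le]
    have h2 : Real.exp (-σ * Real.log t) = t ^ (-σ) := by
      rw [Real.rpow_def_of_pos ht0]; ring_nf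
    have h3 : ε * k - σ ≤ -τ := by
      have : ε * k ≤ (σ - 1) / 2 := by
        rw [hε, div_mul_eq_mul_div, div_le_div_iff₀ (by positivity) (by norm_num)]
        have hk : (k : ℝ) ≤ k + 1 := by linarith
        nlinarith [sub_pos.mpr hσ]
      rw [hτ] at *; linarith
    calc |Real.log t| ^ k * Real.exp (-σ * Real.log t)
        ≤ ((ε⁻¹) ^ k * t ^ (ε * k)) * t ^ (-σ) := by
          rw [h2]
          exact mul_le_mul_of_nonneg_right h1 (Real.rpow_nonneg ht0.le _)
      _ = (ε⁻¹) ^ k * t ^ (ε * k - σ) := by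
          rw [mul_assoc, ← Real.rpow_add ht0, ← sub_eq_add_neg]
      _ ≤ (ε⁻¹) ^ k * t ^ (-τ) := by
          apply mul_le_mul_of_nonneg_left _ (by positivity)
          exact Real.rpow_le_rpow_of_exponent_le ht1 h3
      _ = (ε⁻¹) ^ k * ((n : ℝ) + 1 + α) ^ (-τ) := by
          congr 2
          rw [htdef]; push_cast; ring
  apply Summable.of_nonneg_of_le (fun n => by positivity) key
  apply Summable.mul_left
  have hsub : Summable (fun n : ℕ => ((n : ℝ) + 1) ^ (-τ)) := by
    have := (Real.summable_nat_rpow (p := -τ)).2 (by linarith)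
    rw [← summable_nat_add_iff 1] at this
    simpa using this
  apply Summable.of_nonneg_of_le (fun n => Real.rpow_nonneg (by positivity) _) _ hsub
  intro n
  exact Real.rpow_le_rpow_of_nonpos (by positivity) (by linarith) (by linarith)



/-- Telescoping over `Ico`. -/
lemma aux_telescope_Ico (f : ℕ → ℝ) {a b : ℕ} (hab : a ≤ b) :
    ∑ i ∈ Finset.Ico a b, (f (i + 1) - f i) = f b - f a := by
  rw [Finset.sum_Ico_eq_sum_range]
  have : ∀ i, f (a + i + 1) - f (a + i) = (fun j => f (a + j)) (i + 1) - (fun j => f (a + j)) i := by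
    intro i; simp [Nat.add_assoc]
  simp_rw [this]
  rw [Finset.sum_range_sub (fun j => f (a + j))]
  rw [Nat.add_sub_cancel' hab]
  simp

/-- Total-variation bound for a unimodal bounded sequence. -/
lemma aux_tv {v : ℕ → ℝ} {M : ℝ} (p : ℕ)
    (h0 : ∀ i, 0 ≤ v i) (hM : ∀ i, v i ≤ M)
    (hmono : ∀ i, i + 1 ≤ p → v i ≤ v (i + 1))
    (hanti : ∀ i, p + 1 ≤ i → v (i + 1) ≤ v i) :
    ∀ N, ∑ i ∈ Finset.range N, |v (i + 1) - v i| ≤ 3 * M := by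
  intro N
  have hM0 : 0 ≤ M := le_trans (h0 0) (hM 0)
  have habs : ∀ i, |v (i + 1) - v i| ≤ M := by
    intro i
    rw [abs_sub_le_iff]
    constructor <;> [linarith [h0 i, hM (i+1)]; linarith [h0 (i+1), hM i]]
  rcases le_or_gt N p with hN | hN
  · -- all increasing
    have : ∀ i ∈ Finset.range N, |v (i + 1) - v i| = v (i + 1) - v i := by
      intro i hi
      rw [Finset.mem_range] at hi
      exact abs_of_nonneg (by linarith [hmono i (by omega)])
    rw [Finset.sum_congr rfl this, Finset.range_eq_Ico, aux_telescope_Ico v (Nat.zero_le N)]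
    linarith [h0 0, hM N]
  · -- split at p
    have h1 : (0:ℕ) ≤ p := Nat.zero_le p
    rw [Finset.range_eq_Ico, ← Finset.sum_Ico_consecutive _ (Nat.zero_le p) (by omega : p ≤ N),
      ← Finset.sum_Ico_consecutive _ (by omega : p ≤ p + 1) (by omega : p + 1 ≤ N)]
    have S1 : ∑ i ∈ Finset.Ico 0 p, |v (i + 1) - v i| ≤ M := by
      have : ∀ i ∈ Finset.Ico 0 p, |v (i + 1) - v i| = v (i + 1) - v i := by
        intro i hi
        rw [Finset.mem_Ico] at hi
        exact abs_of_nonneg (by linarith [hmono i (by omega)])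
      rw [Finset.sum_congr rfl this, aux_telescope_Ico v (Nat.zero_le p)]
      linarith [h0 0, hM p]
    have S2 : ∑ i ∈ Finset.Ico p (p + 1), |v (i + 1) - v i| ≤ M := by
      rw [Finset.sum_Ico_eq_sum_range]
      simp [habs p]
    have S3 : ∑ i ∈ Finset.Ico (p + 1) N, |v (i + 1) - v i| ≤ M := by
      have : ∀ i ∈ Finset.Ico (p + 1) N, |v (i + 1) - v i| = -(v (i + 1) - v i) := by
        intro i hi
        rw [Finset.mem_Ico] at hi
        exact abs_of_nonpos (by linarith [hanti i (by omega)])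
      rw [Finset.sum_congr rfl this, Finset.sum_neg_distrib,
        aux_telescope_Ico v (by omega : p + 1 ≤ N)]
      linarith [h0 N, hM (p + 1)]
    linarith


/-- Abel summation bound: if partial sums of `g` are bounded by `K`, `0 ≤ v ≤ M`,
and total variation of `v` is at most `3M`, then all partial sums of `v i • g i`
are bounded by `4MK`. -/
lemma aux_abel_partial {v : ℕ → ℝ} {M K : ℝ} {g : ℕ → ℂ}
    (hM0 : 0 ≤ M) (hK0 : 0 ≤ K)
    (hG : ∀ n : ℕ, ‖∑ i ∈ Finset.range n, g i‖ ≤ K)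
    (h0 : ∀ i, 0 ≤ v i) (hM : ∀ i, v i ≤ M)
    (hTV : ∀ N, ∑ i ∈ Finset.range N, |v (i + 1) - v i| ≤ 3 * M) :
    ∀ N, ‖∑ i ∈ Finset.range N, ((v i : ℂ)) * g i‖ ≤ 4 * M * K := by
  intro N
  have habel := Finset.sum_range_by_parts (fun i => (v i : ℂ)) g N
  simp only [smul_eq_mul] at habel
  rw [habel]
  have h1 : ‖(v (N - 1) : ℂ) * ∑ i ∈ Finset.range N, g i‖ ≤ M * K := by
    rw [norm_mul, Complex.norm_real, Real.norm_eq_abs, _root_.abs_of_nonneg (h0 _)]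
    exact mul_le_mul (hM _) (hG N) (norm_nonneg _) hM0
  have h2 : ‖∑ i ∈ Finset.range (N - 1), ((v (i + 1) : ℂ) - v i) * ∑ j ∈ Finset.range (i + 1), g j‖
      ≤ 3 * M * K := by
    calc ‖∑ i ∈ Finset.range (N - 1), ((v (i + 1) : ℂ) - v i) * ∑ j ∈ Finset.range (i + 1), g j‖
        ≤ ∑ i ∈ Finset.range (N - 1), ‖((v (i + 1) : ℂ) - v i) * ∑ j ∈ Finset.range (i + 1), g j‖ :=
          norm_sum_le _ _
      _ ≤ ∑ i ∈ Finset.range (N - 1), |v (i + 1) - v i| * K := by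
          apply Finset.sum_le_sum
          intro i _
          rw [norm_mul]
          have : ‖(v (i + 1) : ℂ) - v i‖ = |v (i + 1) - v i| := by
            rw [← Complex.ofReal_sub, Complex.norm_real, Real.norm_eq_abs]
          rw [this]
          exact mul_le_mul_of_nonneg_left (hG _) (abs_nonneg _)
      _ = (∑ i ∈ Finset.range (N - 1), |v (i + 1) - v i|) * K := by
          rw [Finset.sum_mul]
      _ ≤ 3 * M * K := mul_le_mul_of_nonneg_right (hTV _) hK0
  calc ‖(v (N - 1) : ℂ) * ∑ i ∈ Finset.range N, g i -
        ∑ i ∈ Finset.range (N - 1), ((v (i + 1) : ℂ) - v i) * ∑ j ∈ Finset.range (i + 1), g j‖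
      ≤ ‖(v (N - 1) : ℂ) * ∑ i ∈ Finset.range N, g i‖ +
        ‖∑ i ∈ Finset.range (N - 1), ((v (i + 1) : ℂ) - v i) * ∑ j ∈ Finset.range (i + 1), g j‖ :=
        norm_sub_le _ _
    _ ≤ M * K + 3 * M * K := add_le_add h1 h2
    _ = 4 * M * K := by ring


lemma aux_z_ne_one {lam : ℝ} (h0 : 0 < lam) (h1 : lam < 1) :
    Complex.exp (2 * Real.pi * Complex.I * lam) ≠ 1 := by
  intro h
  rw [Complex.exp_eq_one_iff] at h
  obtain ⟨n, hn⟩ := h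
  have h2 : (2 * (Real.pi:ℂ) * Complex.I) ≠ 0 :=
    mul_ne_zero (mul_ne_zero two_ne_zero (by exact_mod_cast Real.pi_ne_zero)) Complex.I_ne_zero
  have : (lam : ℂ) = (n : ℂ) := by
    apply mul_right_cancel₀ h2
    rw [← hn]; ring
  have hln : lam = (n : ℝ) := by exact_mod_cast this
  rcases le_or_gt n 0 with hn0 | hn0
  · have : (n : ℝ) ≤ 0 := by exact_mod_cast hn0
    linarith [hln ▸ h0]
  · have : (1 : ℝ) ≤ (n : ℝ) := by exact_mod_cast hn0
    linarith [hln ▸ h1]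

lemma aux_abs_z {lam : ℝ} : ‖Complex.exp (2 * Real.pi * Complex.I * lam)‖ = 1 := by
  rw [Complex.norm_exp]
  norm_num [Complex.mul_re, Complex.mul_im]

lemma aux_norm_one_sub_z {lam : ℝ} (h0 : 0 < lam) (h1 : lam < 1) :
    ‖1 - Complex.exp (2 * Real.pi * Complex.I * lam)‖ = 2 * Real.sin (Real.pi * lam) := by
  have hθ : (2 * Real.pi * Complex.I * lam) = ((2 * Real.pi * lam : ℝ) : ℂ) * Complex.I := by
    push_cast; ring
  rw [hθ, Complex.exp_mul_I, ← Complex.ofReal_cos, ← Complex.ofReal_sin]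
  have : (1 : ℂ) - (Real.cos (2 * Real.pi * lam) + Real.sin (2 * Real.pi * lam) * Complex.I)
      = ((1 - Real.cos (2 * Real.pi * lam) : ℝ) : ℂ)
        + ((-Real.sin (2 * Real.pi * lam) : ℝ) : ℂ) * Complex.I := by
    push_cast; ring
  rw [this, Complex.norm_add_mul_I]
  have hs : Real.sin (Real.pi * lam) ^ 2 = (1 - Real.cos (2 * Real.pi * lam)) / 2 := by
    have h := Real.sin_sq_eq_half_sub (Real.pi * lam)
    rw [show 2 * (Real.pi * lam) = 2 * Real.pi * lam by ring] at h
    linarith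
  have hsnn : 0 ≤ Real.sin (Real.pi * lam) :=
    Real.sin_nonneg_of_nonneg_of_le_pi (by positivity)
      (by nlinarith [Real.pi_pos])
  have : (1 - Real.cos (2 * Real.pi * lam)) ^ 2 + (-Real.sin (2 * Real.pi * lam)) ^ 2
      = (2 * Real.sin (Real.pi * lam)) ^ 2 := by
    have hpy := Real.sin_sq_add_cos_sq (2 * Real.pi * lam)
    nlinarith [hs]
  rw [this, Real.sqrt_sq (by linarith)]

lemma aux_inv_norm {lam : ℝ} (h0 : 0 < lam) (h1 : lam < 1) :
    1 / ‖1 - Complex.exp (2 * Real.pi * Complex.I * lam)‖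
      ≤ (1 / 4) * (1 / lam + 1 / (1 - lam)) := by
  rw [aux_norm_one_sub_z h0 h1]
  have h1l : 0 < 1 - lam := by linarith
  have key : 2 * min lam (1 - lam) ≤ Real.sin (Real.pi * lam) := by
    rcases le_or_gt lam (1 / 2) with hl | hl
    · have := Real.mul_le_sin (x := Real.pi * lam) (by positivity)
        (by nlinarith [Real.pi_pos])
      calc 2 * min lam (1 - lam) ≤ 2 * lam := by
            apply mul_le_mul_of_nonneg_left (min_le_left _ _); norm_num
        _ = 2 / Real.pi * (Real.pi * lam) := by field_simp
        _ ≤ Real.sin (Real.pi * lam) := this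
    · have heq : Real.sin (Real.pi * lam) = Real.sin (Real.pi * (1 - lam)) := by
        rw [show Real.pi * (1 - lam) = Real.pi - Real.pi * lam by ring, Real.sin_pi_sub]
      have := Real.mul_le_sin (x := Real.pi * (1 - lam)) (by positivity)
        (by nlinarith [Real.pi_pos])
      calc 2 * min lam (1 - lam) ≤ 2 * (1 - lam) := by
            apply mul_le_mul_of_nonneg_left (min_le_right _ _); norm_num
        _ = 2 / Real.pi * (Real.pi * (1 - lam)) := by field_simp
        _ ≤ Real.sin (Real.pi * (1 - lam)) := this
        _ = Real.sin (Real.pi * lam) := heq.symm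
  have hmin : 0 < min lam (1 - lam) := lt_min h0 h1l
  have hsin : 0 < Real.sin (Real.pi * lam) := by linarith
  calc 1 / (2 * Real.sin (Real.pi * lam)) ≤ 1 / (4 * min lam (1 - lam)) := by
        apply one_div_le_one_div_of_le (by positivity)
        linarith
    _ = (1 / 4) * (1 / min lam (1 - lam)) := by
        rw [div_mul_div_comm]; norm_num
    _ ≤ (1 / 4) * (1 / lam + 1 / (1 - lam)) := by
        apply mul_le_mul_of_nonneg_left _ (by norm_num)
        have ha : 0 < 1 / lam := by positivity
        have hb : 0 < 1 / (1 - lam) := by positivity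
        rcases min_cases lam (1 - lam) with ⟨hm, _⟩ | ⟨hm, _⟩ <;> rw [hm] <;> linarith

lemma aux_geom_bound {lam : ℝ} (h0 : 0 < lam) (h1 : lam < 1) (n : ℕ) :
    ‖∑ i ∈ Finset.range n, Complex.exp (2 * Real.pi * Complex.I * lam) ^ (i + 1)‖
      ≤ 2 / ‖1 - Complex.exp (2 * Real.pi * Complex.I * lam)‖ := by
  set z := Complex.exp (2 * Real.pi * Complex.I * lam) with hz
  have hzne : z ≠ 1 := aux_z_ne_one h0 h1
  have hz1 : ‖z‖ = 1 := aux_abs_z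
  have hne : ‖1 - z‖ ≠ 0 := by
    simp only [ne_eq, norm_eq_zero, sub_eq_zero]
    intro h; exact hzne h.symm
  have hgeom : ∑ i ∈ Finset.range n, z ^ (i + 1) = z * ((z ^ n - 1) / (z - 1)) := by
    rw [← geom_sum_eq hzne]
    rw [Finset.mul_sum]
    congr 1; ext i; rw [pow_succ]; ring
  rw [hgeom, norm_mul, hz1, one_mul, norm_div]
  rw [div_le_div_iff₀ (lt_of_le_of_ne (norm_nonneg _) (by rw [norm_sub_rev] at hne; exact (Ne.symm hne))) (lt_of_le_of_ne (norm_nonneg _) (Ne.symm hne))]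
  have h2 : ‖z ^ n - 1‖ ≤ 2 := by
    calc ‖z ^ n - 1‖ ≤ ‖z ^ n‖ + ‖(1:ℂ)‖ := norm_sub_le _ _
      _ = 2 := by rw [norm_pow, hz1]; norm_num
  calc ‖z ^ n - 1‖ * ‖1 - z‖ ≤ 2 * ‖1 - z‖ :=
        mul_le_mul_of_nonneg_right h2 (norm_nonneg _)
    _ = 2 * ‖z - 1‖ := by rw [norm_sub_rev]


section mono
variable {σ : ℝ} (m : ℕ)

noncomputable def hfun (σ : ℝ) (m : ℕ) (t : ℝ) : ℝ :=
  (Real.log t) ^ (m + 1) * Real.exp (-σ * Real.log t)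

lemma hfun_hasDeriv {σ : ℝ} (m : ℕ) {t : ℝ} (ht : 0 < t) :
    HasDerivAt (hfun σ m)
      ((Real.log t) ^ m * Real.exp (-σ * Real.log t) * t⁻¹ * ((m + 1 : ℝ) - σ * Real.log t)) t := by
  have hlog : HasDerivAt Real.log t⁻¹ t := Real.hasDerivAt_log (ne_of_gt ht)
  have hA : HasDerivAt (fun t => (Real.log t) ^ (m + 1))
      ((m + 1 : ℕ) * (Real.log t) ^ m * t⁻¹) t := by
    have := hlog.fun_pow (m + 1)
    simpa using this
  have hB : HasDerivAt (fun t => Real.exp (-σ * Real.log t))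
      (Real.exp (-σ * Real.log t) * (-σ * t⁻¹)) t := by
    have hinner : HasDerivAt (fun t => -σ * Real.log t) (-σ * t⁻¹) t := hlog.const_mul (-σ)
    exact hinner.exp
  have : HasDerivAt (hfun σ m) _ t := hA.mul hB
  convert this using 1
  push_cast
  ring
end mono

lemma hfun_monotoneOn {σ : ℝ} (m : ℕ) (hσ : 0 < σ) :
    MonotoneOn (hfun σ m) (Set.Icc 1 (Real.exp ((m + 1) / σ))) := by
  set T := Real.exp ((m + 1) / σ) with hT
  apply monotoneOn_of_deriv_nonneg (convex_Icc 1 T)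
  · intro t ht
    have ht0 : 0 < t := lt_of_lt_of_le one_pos ht.1
    exact ((hfun_hasDeriv m ht0).continuousAt).continuousWithinAt
  · intro t ht
    rw [interior_Icc] at ht
    have ht0 : 0 < t := lt_trans one_pos ht.1
    exact ((hfun_hasDeriv m ht0).differentiableAt).differentiableWithinAt
  · intro t ht
    rw [interior_Icc] at ht
    have ht1 : 1 < t := ht.1
    have ht0 : 0 < t := lt_trans one_pos ht1
    rw [(hfun_hasDeriv m ht0).deriv]
    have hlt : 0 < Real.log t := Real.log_pos ht1
    have hub : σ * Real.log t ≤ (m + 1 : ℝ) := by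
      have : Real.log t < (m + 1) / σ := by
        calc Real.log t < Real.log T := Real.log_lt_log ht0 ht.2
          _ = (m + 1) / σ := Real.log_exp _
      rw [mul_comm]
      calc Real.log t * σ ≤ (m + 1) / σ * σ := by nlinarith
        _ = (m + 1 : ℝ) := by field_simp
    have : (0:ℝ) ≤ (m + 1 : ℝ) - σ * Real.log t := by linarith
    positivity

lemma hfun_antitoneOn {σ : ℝ} (m : ℕ) (hσ : 0 < σ) :
    AntitoneOn (hfun σ m) (Set.Ici (Real.exp ((m + 1) / σ))) := by
  set T := Real.exp ((m + 1) / σ) with hT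
  have hT1 : 1 ≤ T := Real.one_le_exp (by positivity)
  apply antitoneOn_of_deriv_nonpos (convex_Ici T)
  · intro t ht
    have ht0 : 0 < t := lt_of_lt_of_le one_pos (le_trans hT1 ht)
    exact ((hfun_hasDeriv m ht0).continuousAt).continuousWithinAt
  · intro t ht
    rw [interior_Ici] at ht
    have ht0 : 0 < t := lt_of_le_of_lt (by linarith) ht
    exact ((hfun_hasDeriv m ht0).differentiableAt).differentiableWithinAt
  · intro t ht
    rw [interior_Ici] at ht
    have ht1 : 1 < t := lt_of_le_of_lt hT1 ht
    have ht0 : 0 < t := lt_trans one_pos ht1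
    rw [(hfun_hasDeriv m ht0).deriv]
    have hlt : 0 < Real.log t := Real.log_pos ht1
    have hub : (m + 1 : ℝ) ≤ σ * Real.log t := by
      have : (m + 1) / σ < Real.log t := by
        calc (m + 1 : ℝ) / σ = Real.log T := (Real.log_exp _).symm
          _ < Real.log t := Real.log_lt_log (by positivity) ht
      rw [mul_comm]
      calc (m + 1 : ℝ) = (m + 1) / σ * σ := by field_simp
        _ ≤ Real.log t * σ := by nlinarith
    apply mul_nonpos_of_nonneg_of_nonpos
    · positivity
    · linarith


noncomputable def ffun (lam α : ℝ) (k n : ℕ) (s : ℂ) : ℂ :=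
  Complex.exp (2 * Real.pi * Complex.I * lam * n) * ((-(Real.log ((n : ℝ) + α)) : ℝ) : ℂ) ^ k *
    Complex.exp (-s * ((Real.log ((n : ℝ) + α) : ℝ) : ℂ))

noncomputable def Ffun (lam α : ℝ) (k : ℕ) (s : ℂ) : ℂ := ∑' n, ffun lam α k n s

lemma ffun_hasDeriv (lam α : ℝ) (k n : ℕ) (s : ℂ) :
    HasDerivAt (ffun lam α k n) (ffun lam α (k + 1) n s) s := by
  set l : ℝ := Real.log ((n : ℝ) + α) with hl
  have h1 : HasDerivAt (fun s : ℂ => -s * (l : ℂ)) (-(l : ℂ)) s := by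
    simpa using ((hasDerivAt_id s).neg.mul_const (l : ℂ))
  have h2 : HasDerivAt (fun s : ℂ => Complex.exp (-s * (l : ℂ)))
      (Complex.exp (-s * (l : ℂ)) * (-(l : ℂ))) s := by
    simpa [mul_comm] using h1.cexp
  have h3 := h2.const_mul (Complex.exp (2 * Real.pi * Complex.I * lam * n) * ((-l : ℝ) : ℂ) ^ k)
  have h4 : HasDerivAt (ffun lam α k n) _ s := h3
  convert h4 using 1
  show Complex.exp (2 * Real.pi * Complex.I * lam * n) * ((-l : ℝ) : ℂ) ^ (k + 1) *
    Complex.exp (-s * (l : ℂ)) = _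
  rw [pow_succ]
  push_cast
  ring

lemma ffun_norm (lam α : ℝ) (hα : 0 < α) (k n : ℕ) (s : ℂ) :
    ‖ffun lam α k n s‖ = |Real.log ((n : ℝ) + α)| ^ k *
      Real.exp (-s.re * Real.log ((n : ℝ) + α)) := by
  set l : ℝ := Real.log ((n : ℝ) + α) with hl
  have e1 : ‖Complex.exp (2 * Real.pi * Complex.I * lam * n)‖ = 1 := by
    rw [Complex.norm_exp]
    norm_num [Complex.mul_re, Complex.mul_im]
  have e2 : ‖((-l : ℝ) : ℂ) ^ k‖ = |l| ^ k := by
    rw [norm_pow, Complex.norm_real, Real.norm_eq_abs, abs_neg]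
  have e3 : ‖Complex.exp (-s * (l : ℂ))‖ = Real.exp (-s.re * l) := by
    rw [Complex.norm_exp]
    congr 1
    simp [Complex.mul_re]
  rw [ffun, norm_mul, norm_mul, e1, e2, e3, one_mul]

lemma ffun_summable (lam α : ℝ) (hα : 0 < α) (k : ℕ) {s : ℂ} (hs : 1 < s.re) :
    Summable (fun n => ffun lam α k n s) := by
  apply Summable.of_norm
  have : (fun n => ‖ffun lam α k n s‖) = fun n : ℕ =>
      |Real.log ((n : ℝ) + α)| ^ k * Real.exp (-s.re * Real.log ((n : ℝ) + α)) := by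
    funext n; exact ffun_norm lam α hα k n s
  rw [this]
  exact aux_summable hα k hs

lemma Ffun_hasDerivAt (lam α : ℝ) (hα : 0 < α) (k : ℕ) {s : ℂ} (hs : 1 < s.re) :
    HasDerivAt (Ffun lam α k) (Ffun lam α (k + 1) s) s := by
  set σ₀ : ℝ := (1 + s.re) / 2 with hσ₀
  have hσ₀1 : 1 < σ₀ := by rw [hσ₀]; linarith
  have hσ₀s : σ₀ < s.re := by rw [hσ₀]; linarith
  set t : Set ℂ := {z : ℂ | σ₀ < z.re ∧ z.re < s.re + 1} with ht
  have hto : IsOpen t :=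
    (isOpen_lt continuous_const Complex.continuous_re).inter
      (isOpen_lt Complex.continuous_re continuous_const)
  have htc : Convex ℝ t :=
    (convex_halfSpace_re_gt σ₀).inter (convex_halfSpace_re_lt (s.re + 1))
  have hst : s ∈ t := ⟨hσ₀s, by linarith⟩
  set u : ℕ → ℝ := fun n => |Real.log ((n : ℝ) + α)| ^ (k + 1) *
      (Real.exp (-σ₀ * Real.log ((n : ℝ) + α)) +
        Real.exp (-(s.re + 1) * Real.log ((n : ℝ) + α))) with hu
  have hus : Summable u := by
    have h1 := aux_summable hα (k + 1) hσ₀1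
    have h2 := aux_summable hα (k + 1) (show (1:ℝ) < s.re + 1 by linarith)
    have : u = fun n : ℕ => |Real.log ((n : ℝ) + α)| ^ (k + 1) *
        Real.exp (-σ₀ * Real.log ((n : ℝ) + α)) +
        |Real.log ((n : ℝ) + α)| ^ (k + 1) *
        Real.exp (-(s.re + 1) * Real.log ((n : ℝ) + α)) := by
      funext n; rw [hu]; ring
    rw [this]
    exact h1.add h2
  have key := hasDerivAt_tsum_of_isPreconnected hus hto htc.isPreconnected
    (g := fun n z => ffun lam α k n z) (g' := fun n z => ffun lam α (k + 1) n z)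
    (fun n y _ => ffun_hasDeriv lam α k n y) ?_ hst (ffun_summable lam α hα k hs) hst
  · exact key
  · intro n y hy
    rw [ffun_norm lam α hα (k + 1) n y, hu]
    apply mul_le_mul_of_nonneg_left _ (by positivity)
    set l := Real.log ((n : ℝ) + α)
    rcases le_or_gt 0 l with hl | hl
    · have : -y.re * l ≤ -σ₀ * l := by nlinarith [hy.1]
      calc Real.exp (-y.re * l) ≤ Real.exp (-σ₀ * l) := Real.exp_le_exp.2 this
        _ ≤ _ := le_add_of_nonneg_right (Real.exp_pos _).le
    · have : -y.re * l ≤ -(s.re + 1) * l := by nlinarith [hy.2]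
      calc Real.exp (-y.re * l) ≤ Real.exp (-(s.re + 1) * l) := Real.exp_le_exp.2 this
        _ ≤ _ := le_add_of_nonneg_left (Real.exp_pos _).le

lemma iteratedDeriv_eq_Ffun (lam α : ℝ) (hα : 0 < α) (φ : ℂ → ℂ)
    (hsum : ∀ s : ℂ, 1 < s.re → HasSum
      (fun n : ℕ => Complex.exp (2 * Real.pi * Complex.I * lam * n) * ((n : ℂ) + α) ^ (-s))
      (φ s)) :
    ∀ k : ℕ, ∀ s : ℂ, 1 < s.re → iteratedDeriv k φ s = Ffun lam α k s := by
  have hbase : ∀ s : ℂ, 1 < s.re → φ s = Ffun lam α 0 s := by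
    intro s hs
    rw [← (hsum s hs).tsum_eq]
    apply tsum_congr
    intro n
    rw [ffun]
    have hpos : (0:ℝ) < (n : ℝ) + α := by positivity
    have hne : ((n : ℂ) + α) ≠ 0 := by
      have : ((n : ℂ) + α) = (((n : ℝ) + α : ℝ) : ℂ) := by push_cast; ring
      rw [this]
      exact_mod_cast ne_of_gt hpos
    rw [Complex.cpow_def_of_ne_zero hne]
    have hlog : Complex.log ((n : ℂ) + α) = ((Real.log ((n : ℝ) + α) : ℝ) : ℂ) := by
      have : ((n : ℂ) + α) = (((n : ℝ) + α : ℝ) : ℂ) := by push_cast; ring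
      rw [this, ← Complex.ofReal_log hpos.le]
    rw [hlog, pow_zero, mul_one]
    congr 1
    ring
  intro k
  induction k with
  | zero => intro s hs; rw [iteratedDeriv_zero]; exact hbase s hs
  | succ k ih =>
    intro s hs
    rw [iteratedDeriv_succ]
    have hev : iteratedDeriv k φ =ᶠ[nhds s] Ffun lam α k := by
      have hopen : IsOpen {z : ℂ | 1 < z.re} := isOpen_lt continuous_const Complex.continuous_re
      filter_upwards [hopen.mem_nhds hs] with z hz
      exact ih z hz
    rw [hev.deriv_eq]
    exact (Ffun_hasDerivAt lam α hα k hs).deriv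

set_option maxHeartbeats 2000000 in
lemma tail_bound (lam α : ℝ) (hl0 : 0 < lam) (hl1 : lam < 1) (hα0 : 0 < α) (hα1 : α ≤ 1)
    {m : ℕ} {σ : ℝ} (hσ : 1 < σ) :
    ‖Ffun lam α (m + 1) ((σ : ℝ) : ℂ) - ffun lam α (m + 1) 0 ((σ : ℝ) : ℂ)‖ ≤
      8 * (((m : ℝ) + 1) ^ (m + 1) * Real.exp (-((m : ℝ) + 1))) /
        ‖1 - Complex.exp (2 * Real.pi * Complex.I * lam)‖ := by
  set r : ℕ := m + 1 with hrdef
  set z : ℂ := Complex.exp (2 * Real.pi * Complex.I * lam) with hz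
  set M : ℝ := ((m : ℝ) + 1) ^ (m + 1) * Real.exp (-((m : ℝ) + 1)) with hM
  set K : ℝ := 2 / ‖1 - z‖ with hK
  have hσ0 : 0 < σ := by linarith
  have hsre : ((σ : ℝ) : ℂ).re = σ := Complex.ofReal_re σ
  have hσs : 1 < ((σ : ℝ) : ℂ).re := by rw [hsre]; exact hσ
  have hsum0 : Summable (fun n => ffun lam α r n ((σ : ℝ) : ℂ)) :=
    ffun_summable lam α hα0 r hσs
  -- the sequence v
  set v : ℕ → ℝ := fun j => hfun σ m ((j : ℝ) + 1 + α) with hv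
  have hv1 : ∀ j : ℕ, (1 : ℝ) ≤ (j : ℝ) + 1 + α := by
    intro j
    have : (0:ℝ) ≤ (j : ℝ) := Nat.cast_nonneg j
    linarith
  have hterm : ∀ j : ℕ, ffun lam α r (j + 1) ((σ : ℝ) : ℂ) =
      (-1 : ℂ) ^ r * ((v j : ℝ) : ℂ) * z ^ (j + 1) := by
    intro j
    rw [ffun]
    have e1 : (2 * (Real.pi : ℂ) * Complex.I * lam * ((j + 1 : ℕ) : ℂ))
        = ((j + 1 : ℕ) : ℂ) * (2 * Real.pi * Complex.I * lam) := by ring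
    rw [e1, Complex.exp_nat_mul]
    have e2 : -((σ : ℝ) : ℂ) * ((Real.log (((j + 1 : ℕ) : ℝ) + α) : ℝ) : ℂ)
        = ((-σ * Real.log (((j + 1 : ℕ) : ℝ) + α) : ℝ) : ℂ) := by push_cast; ring
    rw [e2, ← Complex.ofReal_exp]
    have e3 : ((j + 1 : ℕ) : ℝ) = (j : ℝ) + 1 := by push_cast; ring
    rw [hv]
    show _ = (-1 : ℂ) ^ r * ((hfun σ m ((j : ℝ) + 1 + α) : ℝ) : ℂ) * z ^ (j + 1)
    rw [hfun, e3]
    push_cast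
    ring
  -- bounds on v
  have h0v : ∀ j, 0 ≤ v j := by
    intro j
    rw [hv]
    show 0 ≤ hfun σ m ((j : ℝ) + 1 + α)
    rw [hfun]
    apply mul_nonneg (pow_nonneg (Real.log_nonneg (hv1 j)) _) (Real.exp_pos _).le
  have hMv : ∀ j, v j ≤ M := by
    intro j
    rw [hv, hM]
    show hfun σ m ((j : ℝ) + 1 + α) ≤ _
    rw [hfun]
    have := aux_peak (t := (j : ℝ) + 1 + α) (σ := σ) (r := m + 1) (hv1 j) (le_of_lt hσ)
      (Nat.le_add_left 1 m)
    calc Real.log ((j:ℝ) + 1 + α) ^ (m + 1) * Real.exp (-σ * Real.log ((j:ℝ) + 1 + α))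
        ≤ ((m + 1 : ℕ) : ℝ) ^ (m + 1) * Real.exp (-((m + 1 : ℕ) : ℝ)) := this
      _ = ((m : ℝ) + 1) ^ (m + 1) * Real.exp (-((m : ℝ) + 1)) := by push_cast; ring_nf
  -- monotonicity structure
  set T : ℝ := Real.exp (((m : ℝ) + 1) / σ) with hT
  set p : ℕ := ⌊T - α - 1⌋₊ with hp
  have hmono : ∀ i, i + 1 ≤ p → v i ≤ v (i + 1) := by
    intro i hi
    have hp1 : 1 ≤ p := by omega
    have hTα : (0:ℝ) ≤ T - α - 1 := by
      by_contra hcon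
      push_neg at hcon
      have : p = 0 := by rw [hp]; exact Nat.floor_of_nonpos hcon.le
      omega
    have hple : (p : ℝ) ≤ T - α - 1 := by rw [hp]; exact Nat.floor_le hTα
    have hc : ((i : ℝ) + 1) ≤ (p : ℝ) := by exact_mod_cast hi
    have hcast : (((i + 1 : ℕ)) : ℝ) = (i : ℝ) + 1 := by push_cast; ring
    rw [hv]
    show hfun σ m ((i : ℝ) + 1 + α) ≤ hfun σ m (((i + 1 : ℕ) : ℝ) + 1 + α)
    rw [hcast]
    apply hfun_monotoneOn m hσ0
    · exact ⟨hv1 i, by linarith⟩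
    · refine ⟨by linarith [hv1 i], by linarith⟩
    · linarith
  have hanti : ∀ i, p + 1 ≤ i → v (i + 1) ≤ v i := by
    intro i hi
    have hlow : T - α - 1 < (p : ℝ) + 1 := by rw [hp]; exact Nat.lt_floor_add_one _
    have hc : (p : ℝ) + 1 ≤ (i : ℝ) := by exact_mod_cast hi
    have hcast : (((i + 1 : ℕ)) : ℝ) = (i : ℝ) + 1 := by push_cast; ring
    rw [hv]
    show hfun σ m (((i + 1 : ℕ) : ℝ) + 1 + α) ≤ hfun σ m ((i : ℝ) + 1 + α)
    rw [hcast]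
    apply hfun_antitoneOn m hσ0
    · show T ≤ (i : ℝ) + 1 + α
      linarith
    · show T ≤ (i : ℝ) + 1 + 1 + α
      linarith
    · linarith
  have hM0 : 0 ≤ M := le_trans (h0v 0) (hMv 0)
  have hK0 : 0 ≤ K := div_nonneg (by norm_num) (norm_nonneg _)
  have hTV := aux_tv p h0v hMv hmono hanti
  have hG : ∀ n : ℕ, ‖∑ i ∈ Finset.range n, z ^ (i + 1)‖ ≤ K := fun n =>
    aux_geom_bound hl0 hl1 n
  have hpartial := aux_abel_partial hM0 hK0 hG h0v hMv hTV
  -- summability of the v-series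
  have hshift : Summable (fun j => ffun lam α r (j + 1) ((σ : ℝ) : ℂ)) :=
    (summable_nat_add_iff 1).2 hsum0
  have hone : ((-1 : ℂ)) ^ r * ((-1 : ℂ)) ^ r = 1 := by
    rw [← mul_pow]; norm_num
  have hvsum : Summable (fun j => ((v j : ℝ) : ℂ) * z ^ (j + 1)) := by
    have h2 := hshift.mul_left ((-1 : ℂ) ^ r)
    have heq : (fun j => ((-1 : ℂ)) ^ r * ffun lam α r (j + 1) ((σ : ℝ) : ℂ))
        = fun j => ((v j : ℝ) : ℂ) * z ^ (j + 1) := by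
      funext j
      rw [hterm j, show ((-1:ℂ))^r * (((-1:ℂ))^r * ((v j : ℝ):ℂ) * z^(j+1))
        = (((-1:ℂ))^r * ((-1:ℂ))^r) * (((v j : ℝ):ℂ) * z^(j+1)) by ring, hone, one_mul]
    rwa [heq] at h2
  -- tsum bound
  have htsum_bound : ‖∑' j, ((v j : ℝ) : ℂ) * z ^ (j + 1)‖ ≤ 4 * M * K := by
    have h3 := hvsum.hasSum.tendsto_sum_nat
    exact le_of_tendsto h3.norm (Eventually.of_forall hpartial)
  -- split the sum
  have hsplit : Ffun lam α r ((σ : ℝ) : ℂ) - ffun lam α r 0 ((σ : ℝ) : ℂ)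
      = ∑' j, ffun lam α r (j + 1) ((σ : ℝ) : ℂ) := by
    rw [Ffun, Summable.tsum_eq_zero_add hsum0]
    ring
  have hsum_eq : ∑' j, ffun lam α r (j + 1) ((σ : ℝ) : ℂ)
      = (-1 : ℂ) ^ r * ∑' j, ((v j : ℝ) : ℂ) * z ^ (j + 1) := by
    rw [← tsum_mul_left]
    apply tsum_congr
    intro j
    rw [hterm j]
    ring
  rw [hsplit, hsum_eq, norm_mul]
  have : ‖(-1 : ℂ) ^ r‖ = 1 := by
    rw [norm_pow, norm_neg, norm_one, one_pow]
  rw [this, one_mul]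
  calc ‖∑' j, ((v j : ℝ) : ℂ) * z ^ (j + 1)‖ ≤ 4 * M * K := htsum_bound
    _ = 8 * M / ‖1 - z‖ := by rw [hK]; ring


/-- for the Lerch zeta function `φ(λ,α,s)` (the entire continuation of
`∑_{n≥0} e^{2πiλn}(n+α)^{-s}`, `0 < λ < 1`), for every `r ≥ 1`,
`|φ^{(r)}(λ,α,1)/r! - (-1)^r (log α)^r/(r!·α)| ≪ (r^r e^{-r}/r!)(1/λ + 1/(1-λ))`
with an absolute implied constant. -/
theorem stmt9 : ∃ C : ℝ, 0 < C ∧ ∀ (lam α : ℝ), 0 < lam → lam < 1 → 0 < α → α ≤ 1 →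
    ∀ φ : ℂ → ℂ, Differentiable ℂ φ →
    (∀ s : ℂ, 1 < s.re → HasSum
      (fun n : ℕ => Complex.exp (2 * Real.pi * Complex.I * lam * n) * ((n : ℂ) + α) ^ (-s))
      (φ s)) →
    ∀ r : ℕ, 1 ≤ r →
    ‖iteratedDeriv r φ 1 / (Nat.factorial r : ℂ)
        - (-1) ^ r * (Real.log α : ℂ) ^ r / ((Nat.factorial r : ℂ) * α)‖ ≤
      C * ((r : ℝ) ^ r * Real.exp (-(r : ℝ)) / (Nat.factorial r : ℝ))
        * (1 / lam + 1 / (1 - lam)) := by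
  refine ⟨8, by norm_num, ?_⟩
  intro lam α hl0 hl1 hα0 hα1 φ hφ hsum r hr
  obtain ⟨m, rfl⟩ : ∃ m, r = m + 1 := ⟨r - 1, by omega⟩
  set M : ℝ := ((m : ℝ) + 1) ^ (m + 1) * Real.exp (-((m : ℝ) + 1)) with hMdef
  have hM0 : 0 ≤ M := by positivity
  set S : ℝ := 1 / lam + 1 / (1 - lam) with hS
  have hS0 : 0 ≤ S := by
    have h1 : (0:ℝ) < 1 / lam := by positivity
    have h2 : (0:ℝ) < 1 / (1 - lam) := by
      have : (0:ℝ) < 1 - lam := by linarith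
      positivity
    rw [hS]; linarith
  -- continuity of the iterated derivative
  have hcd : ContDiff ℂ (⊤ : ℕ∞) φ :=
    contDiff_iff_contDiffAt.mpr fun x => (hφ.analyticAt x).contDiffAt
  have hcont : Continuous (iteratedDeriv (m + 1) φ) :=
    hcd.continuous_iteratedDeriv (m + 1) (by exact_mod_cast le_top)
  -- continuity of the 0-th term in s
  have hffc : Continuous (ffun lam α (m + 1) 0) := by
    unfold ffun
    fun_prop
  -- limit along real σ → 1⁺
  have t0 : Tendsto (fun σ : ℝ => ((σ : ℝ) : ℂ)) (nhdsWithin (1:ℝ) (Set.Ioi 1)) (nhds (1 : ℂ)) := by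
    have := (Complex.continuous_ofReal.tendsto 1).mono_left
      (nhdsWithin_le_nhds (s := Set.Ioi (1:ℝ)))
    simpa using this
  have hg1 : Tendsto
      (fun σ : ℝ => iteratedDeriv (m + 1) φ ((σ : ℝ) : ℂ) - ffun lam α (m + 1) 0 ((σ : ℝ) : ℂ))
      (nhdsWithin (1:ℝ) (Set.Ioi 1))
      (nhds (iteratedDeriv (m + 1) φ 1 - ffun lam α (m + 1) 0 1)) :=
    ((hcont.tendsto 1).comp t0).sub ((hffc.tendsto 1).comp t0)
  have hev : ∀ᶠ σ in nhdsWithin (1:ℝ) (Set.Ioi 1),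
      ‖iteratedDeriv (m + 1) φ ((σ : ℝ) : ℂ) - ffun lam α (m + 1) 0 ((σ : ℝ) : ℂ)‖ ≤
        8 * M / ‖1 - Complex.exp (2 * Real.pi * Complex.I * lam)‖ := by
    filter_upwards [self_mem_nhdsWithin] with σ hσ
    have hσ1 : 1 < σ := hσ
    have hre : 1 < (((σ : ℝ) : ℂ)).re := by rwa [Complex.ofReal_re]
    rw [iteratedDeriv_eq_Ffun lam α hα0 φ hsum (m + 1) _ hre]
    exact tail_bound lam α hl0 hl1 hα0 hα1 hσ1
  have hnorm : ‖iteratedDeriv (m + 1) φ 1 - ffun lam α (m + 1) 0 1‖ ≤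
      8 * M / ‖1 - Complex.exp (2 * Real.pi * Complex.I * lam)‖ :=
    le_of_tendsto hg1.norm hev
  -- bound the constant
  have hb2 : 8 * M / ‖1 - Complex.exp (2 * Real.pi * Complex.I * lam)‖ ≤ 2 * M * S := by
    have := aux_inv_norm hl0 hl1
    calc 8 * M / ‖1 - Complex.exp (2 * Real.pi * Complex.I * lam)‖
        = 8 * M * (1 / ‖1 - Complex.exp (2 * Real.pi * Complex.I * lam)‖) := by ring
      _ ≤ 8 * M * ((1 / 4) * S) := by
          apply mul_le_mul_of_nonneg_left this (by positivity)
      _ = 2 * M * S := by ring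
  -- value of the 0-th term at s = 1
  have hT : ffun lam α (m + 1) 0 1 =
      (-1 : ℂ) ^ (m + 1) * ((Real.log α : ℝ) : ℂ) ^ (m + 1) * ((α : ℝ) : ℂ)⁻¹ := by
    rw [ffun]
    have h0 : ((0 : ℕ) : ℝ) + α = α := by norm_num
    rw [h0]
    have e1 : (2 * (Real.pi : ℂ) * Complex.I * lam * ((0 : ℕ) : ℂ)) = 0 := by
      norm_num
    rw [e1, Complex.exp_zero, one_mul]
    have e2 : (-(1 : ℂ)) * ((Real.log α : ℝ) : ℂ) = ((-Real.log α : ℝ) : ℂ) := by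
      push_cast; ring
    rw [e2, ← Complex.ofReal_exp, Real.exp_neg, Real.exp_log hα0]
    push_cast
    ring
  -- final algebra
  have hαc : ((α : ℝ) : ℂ) ≠ 0 := by exact_mod_cast ne_of_gt hα0
  have hfc : ((Nat.factorial (m + 1) : ℕ) : ℂ) ≠ 0 := by
    exact_mod_cast Nat.factorial_ne_zero (m + 1)
  have hfr : (0:ℝ) < ((Nat.factorial (m + 1) : ℕ) : ℝ) := by
    exact_mod_cast Nat.factorial_pos (m + 1)
  have hLHS : iteratedDeriv (m + 1) φ 1 / ((Nat.factorial (m + 1) : ℕ) : ℂ)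
      - (-1) ^ (m + 1) * ((Real.log α : ℝ) : ℂ) ^ (m + 1) /
        (((Nat.factorial (m + 1) : ℕ) : ℂ) * ((α : ℝ) : ℂ))
      = (iteratedDeriv (m + 1) φ 1 - ffun lam α (m + 1) 0 1) /
        ((Nat.factorial (m + 1) : ℕ) : ℂ) := by
    rw [hT]
    field_simp
  rw [hLHS, norm_div]
  have hnf : ‖((Nat.factorial (m + 1) : ℕ) : ℂ)‖ = ((Nat.factorial (m + 1) : ℕ) : ℝ) := by
    rw [Complex.norm_natCast]
  rw [hnf]
  have hMcast : ((m + 1 : ℕ) : ℝ) ^ (m + 1) * Real.exp (-((m + 1 : ℕ) : ℝ)) = M := by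
    rw [hMdef]; push_cast; ring_nf
  rw [hMcast]
  have hchain : ‖iteratedDeriv (m + 1) φ 1 - ffun lam α (m + 1) 0 1‖ ≤ 2 * M * S :=
    le_trans hnorm hb2
  have hMf : 0 ≤ M / ((Nat.factorial (m + 1) : ℕ) : ℝ) := by positivity
  calc ‖iteratedDeriv (m + 1) φ 1 - ffun lam α (m + 1) 0 1‖ / ((Nat.factorial (m + 1) : ℕ) : ℝ)
      ≤ 2 * M * S / ((Nat.factorial (m + 1) : ℕ) : ℝ) := by gcongr
    _ = 2 * (M / ((Nat.factorial (m + 1) : ℕ) : ℝ)) * S := by ring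
    _ ≤ 8 * (M / ((Nat.factorial (m + 1) : ℕ) : ℝ)) * S := by nlinarith [mul_nonneg hMf hS0]
end

section
/- For a non-principal Dirichlet character χ mod q, the Taylor coefficients γ_n(χ) of L(s,χ) = ∑_{n≥0} γ_n(χ)(s-1)^n at s = 1 satisfy γ_n(χ) = (1/q) ∑_{a=1}^q χ(a) ∑_{j=0}^n ((-1)^j/j!) (log q)^j γ_{n-j}(a/q), where γ_m(α) are the generalized Stieltjes constants of the Hurwitz zeta function ζ(s,α). -/
open Complex Filter Topology

private lemma norm_summable_aux {c : ℕ → ℂ} {w z : ℂ}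
    (hsum : Summable fun n => c n * w ^ n) (hz : ‖z‖ < ‖w‖) :
    Summable fun n => ‖c n * z ^ n‖ := by
  have hw0 : (0:ℝ) < ‖w‖ := lt_of_le_of_lt (norm_nonneg z) hz
  obtain ⟨C, hC⟩ : ∃ C, ∀ n, ‖c n * w ^ n‖ ≤ C := by
    obtain ⟨C, hC⟩ := hsum.tendsto_atTop_zero.norm.bddAbove_range
    exact ⟨C, fun n => hC ⟨n, rfl⟩⟩
  refine Summable.of_nonneg_of_le (fun n => norm_nonneg _) (fun n => ?_)
    ((summable_geometric_of_lt_one (by positivity)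
      ((div_lt_one hw0).mpr hz)).mul_left C)
  have hwn : ‖w‖ ^ n ≠ 0 := by positivity
  calc ‖c n * z ^ n‖ = ‖c n * w ^ n‖ * (‖z‖ / ‖w‖) ^ n := by
        rw [norm_mul, norm_mul, norm_pow, norm_pow, div_pow, mul_assoc,
          mul_div_cancel₀ _ hwn]
    _ ≤ C * (‖z‖ / ‖w‖) ^ n := by
        have : (0:ℝ) ≤ (‖z‖ / ‖w‖) ^ n := by positivity
        exact mul_le_mul_of_nonneg_right (hC n) this

private lemma coeff_zero_of_hasSum_zero {c : ℕ → ℂ} {r : ℝ} (hr : 0 < r)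
    (h : ∀ z : ℂ, z ≠ 0 → ‖z‖ < r → HasSum (fun n => c n * z ^ n) 0) : c = 0 := by
  set p := FormalMultilinearSeries.ofScalars ℂ c with hp
  have hw : Summable fun n => c n * ((3 * r / 4 : ℝ) : ℂ) ^ n := by
    refine (h _ ?_ ?_).summable
    · exact_mod_cast (by positivity : (3 * r / 4 : ℝ)  ≠ 0)
    · rw [Complex.norm_real, Real.norm_of_nonneg (by positivity)]; linarith
  have hns : Summable fun n => ‖c n * ((r / 2 : ℝ) : ℂ) ^ n‖ := by
    refine norm_summable_aux hw ?_
    rw [Complex.norm_real, Complex.norm_real, Real.norm_of_nonneg (by positivity),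
      Real.norm_of_nonneg (by positivity)]
    linarith
  have hrad : ((Real.toNNReal (r / 2)) : ENNReal) ≤ p.radius := by
    refine p.le_radius_of_summable_norm ?_
    have : ∀ n : ℕ, ‖p n‖ * ((Real.toNNReal (r / 2)) : ℝ) ^ n = ‖c n * ((r / 2 : ℝ) : ℂ) ^ n‖ := by
      intro n
      rw [norm_mul, norm_pow, Complex.norm_real, Real.norm_of_nonneg (by positivity),
        FormalMultilinearSeries.ofScalars_norm, Real.coe_toNNReal _ (by positivity)]
    simpa only [this] using hns
  have hpos : 0 < p.radius := lt_of_lt_of_le (by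
    rw [ENNReal.coe_pos]
    exact Real.toNNReal_pos.mpr (by positivity)) hrad
  have hat : HasFPowerSeriesAt p.sum p 0 := (p.hasFPowerSeriesOnBall hpos).hasFPowerSeriesAt
  have hsumz : ∀ z : ℂ, z ≠ 0 → ‖z‖ < r → p.sum z = 0 := by
    intro z h1 h2
    rw [FormalMultilinearSeries.sum]
    simp_rw [hp, FormalMultilinearSeries.ofScalars_apply_eq, smul_eq_mul]
    exact (h z h1 h2).tsum_eq
  have hev : ∀ᶠ z in 𝓝 (0:ℂ), z ≠ 0 → p.sum z = 0 := by
    filter_upwards [Metric.ball_mem_nhds (0:ℂ) hr] with z hz hz0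
    exact hsumz z hz0 (by simpa using hz)
  have h0 : p.sum 0 = 0 := by
    have h1 : Tendsto p.sum (𝓝[≠] (0:ℂ)) (𝓝 (p.sum 0)) :=
      hat.continuousAt.continuousWithinAt.tendsto
    have h2 : Tendsto p.sum (𝓝[≠] (0:ℂ)) (𝓝 0) := by
      refine Tendsto.congr' ?_ tendsto_const_nhds
      exact (eventually_nhdsWithin_iff.mpr (hev.mono fun z hz hz0 => (hz hz0).symm))
    exact tendsto_nhds_unique h1 h2
  have hfz : p.sum =ᶠ[𝓝 (0:ℂ)] 0 := by
    filter_upwards [hev] with z hz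
    rcases eq_or_ne z 0 with rfl | hne
    · simpa using h0
    · simpa using hz hne
  have : p = 0 := hat.eq_zero_of_eventually hfz
  exact (FormalMultilinearSeries.ofScalars_series_eq_zero ℂ).mp this

private lemma circle_eq (q : ℕ) [NeZero q] (a : ℕ) :
    HurwitzZeta.hurwitzZeta (ZMod.toAddCircle (a : ZMod q)) =
      HurwitzZeta.hurwitzZeta ((a / q : ℝ) : UnitAddCircle) := by
  have hq : (0:ℝ) < q := by exact_mod_cast Nat.pos_of_ne_zero (NeZero.ne q)
  have key : (ZMod.toAddCircle (a : ZMod q)) = ((a / q : ℝ) : UnitAddCircle) := by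
    rw [ZMod.toAddCircle_apply, ZMod.val_natCast]
    rw [eq_comm, ← sub_eq_zero, ← AddCircle.coe_sub, AddCircle.coe_eq_zero_iff]
    refine ⟨(a / q : ℕ), ?_⟩
    have h' : (q:ℝ) * ((a / q : ℕ) : ℝ) + ((a % q : ℕ) : ℝ) = (a : ℝ) :=
      by exact_mod_cast Nat.div_add_mod a q
    rw [zsmul_eq_mul, mul_one, Int.cast_natCast]
    field_simp
    linarith
  rw [key]

private lemma sum_Icc_eq (q : ℕ) [NeZero q] (F : ZMod q → ℂ) :
    ∑ a ∈ Finset.Icc 1 q, F (a : ZMod q) = ∑ x : ZMod q, F x := by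
  have hq : 0 < q := Nat.pos_of_ne_zero (NeZero.ne q)
  refine Finset.sum_nbij' (fun a => (a : ZMod q)) (fun x => if x = 0 then q else x.val)
    (fun a _ => Finset.mem_univ _) ?_ ?_ ?_ (fun a _ => rfl)
  · intro x _
    rcases eq_or_ne x 0 with rfl | hx
    · rw [if_pos rfl, Finset.mem_Icc]
      exact ⟨hq, le_refl q⟩
    · simp only [if_neg hx, Finset.mem_Icc]
      exact ⟨Nat.one_le_iff_ne_zero.mpr (fun h => hx ((ZMod.val_eq_zero x).mp h)),
        (ZMod.val_lt x).le⟩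
  · intro a ha
    rw [Finset.mem_Icc] at ha
    rcases eq_or_lt_of_le ha.2 with rfl | hlt
    · simp
    · have hne : (a : ZMod q) ≠ 0 := by
        intro h
        have h2 := Nat.le_of_dvd (by omega) ((ZMod.natCast_eq_zero_iff a q).mp h)
        omega
      rw [if_neg hne, ZMod.val_natCast, Nat.mod_eq_of_lt hlt]
  · intro x _
    rcases eq_or_ne x 0 with rfl | hx
    · simp
    · rw [if_neg hx, ZMod.natCast_val, ZMod.cast_id]

/-- for a non-principal Dirichlet character `χ` mod `q`, if `γχ n` are the
Taylor coefficients of `L(s,χ)` at `s = 1` and `γH a m` the Laurent coefficients of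
`ζ(s, a/q)` at `s = 1`, then
`γχ n = (1/q) ∑_{a=1}^q χ(a) ∑_{j=0}^n ((-1)^j/j!)(log q)^j γH a (n-j)`. -/
theorem stmt17 (q : ℕ) [NeZero q] (χ : DirichletCharacter ℂ q) (hχ : χ ≠ 1)
    (γχ : ℕ → ℂ)
    (hγχ : ∀ s : ℂ, ‖s - 1‖ < 1 → HasSum (fun n : ℕ => γχ n * (s - 1) ^ n)
      (DirichletCharacter.LFunction χ s))
    (γH : ℕ → ℕ → ℂ)
    (hγH : ∀ a ∈ Finset.Icc 1 q, ∀ᶠ s : ℂ in 𝓝[≠] 1,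
      HasSum (fun m : ℕ => γH a m * (s - 1) ^ m)
        (HurwitzZeta.hurwitzZeta ((a / q : ℝ) : UnitAddCircle) s - 1 / (s - 1)))
    (n : ℕ) :
    γχ n = (1 / q : ℂ) * ∑ a ∈ Finset.Icc 1 q, χ (a : ZMod q) *
      ∑ j ∈ Finset.range (n + 1),
        ((-1) ^ j / (Nat.factorial j : ℂ)) * (Real.log q : ℂ) ^ j * γH a (n - j) := by
  have hqpos : 0 < q := Nat.pos_of_ne_zero (NeZero.ne q)
  have hq0 : (q : ℂ) ≠ 0 := by exact_mod_cast hqpos.ne'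
  set c : ℕ → ℂ := fun m => (1 / q : ℂ) * ∑ a ∈ Finset.Icc 1 q, χ (a : ZMod q) *
      ∑ j ∈ Finset.range (m + 1),
        ((-1) ^ j / (Nat.factorial j : ℂ)) * (Real.log q : ℂ) ^ j * γH a (m - j) with hcdef
  have hall := (Finset.eventually_all (Finset.Icc 1 q)).mpr hγH
  rw [eventually_nhdsWithin_iff, Metric.eventually_nhds_iff] at hall
  obtain ⟨ε, hε, hball⟩ := hall
  set r : ℝ := min ε 1 with hrdef
  have hr : 0 < r := lt_min hε one_pos
  have key : (fun m => γχ m - c m) = 0 := by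
    apply coeff_zero_of_hasSum_zero hr
    intro z hz0 hzr
    have hz1 : ‖z‖ < 1 := lt_of_lt_of_le hzr (min_le_right _ _)
    have hzε : ‖z‖ < ε := lt_of_lt_of_le hzr (min_le_left _ _)
    set s : ℂ := 1 + z with hsdef
    have hsz : s - 1 = z := by rw [hsdef]; ring
    have hs1 : s ≠ 1 := fun h => hz0 (by rw [← hsz, h, sub_self])
    have hA : HasSum (fun m => γχ m * z ^ m) (DirichletCharacter.LFunction χ s) := by
      have := hγχ s (by rw [hsz]; exact hz1)
      simpa only [hsz] using this
    have hB : ∀ a ∈ Finset.Icc 1 q, HasSum (fun m => γH a m * z ^ m)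
        (HurwitzZeta.hurwitzZeta ((a / q : ℝ) : UnitAddCircle) s - 1 / z) := by
      intro a ha
      have hd : dist s 1 < ε := by rw [dist_eq_norm, hsz]; exact hzε
      have hmem : s ∈ ({1}ᶜ : Set ℂ) := by simpa using hs1
      have := hball hd hmem a ha
      simpa only [hsz] using this
    set w : ℝ := (‖z‖ + r) / 2 with hwdef
    have hwpos : 0 < w := by positivity
    have hzw : ‖z‖ < w := by rw [hwdef]; linarith
    have hwr : w < r := by rw [hwdef]; linarith
    have hBsum : ∀ a ∈ Finset.Icc 1 q, Summable (fun m => ‖γH a m * z ^ m‖) := by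
      intro a ha
      refine norm_summable_aux (w := (w : ℂ)) ?_ ?_
      · have hd : dist (1 + (w : ℂ)) 1 < ε := by
          rw [dist_eq_norm]
          have : (1 + (w:ℂ)) - 1 = (w:ℂ) := by ring
          rw [this, Complex.norm_real, Real.norm_of_nonneg hwpos.le]
          exact lt_of_lt_of_le hwr (min_le_left _ _)
        have hne : (1 + (w : ℂ)) ∈ ({1}ᶜ : Set ℂ) := by
          simp only [Set.mem_compl_iff, Set.mem_singleton_iff]
          intro h
          have : (w : ℂ) = 0 := by linear_combination h
          exact hwpos.ne' (by exact_mod_cast this)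
        have := hball hd hne a ha
        have h1 : (1 + (w:ℂ)) - 1 = (w:ℂ) := by ring
        rw [h1] at this
        exact this.summable
      · rw [Complex.norm_real, Real.norm_of_nonneg hwpos.le]; exact hzw
    have hC : HasSum (fun j => ((-1)^j / (Nat.factorial j : ℂ)) * (Real.log q : ℂ)^j * z ^ j)
        ((q:ℂ) ^ (-s) * q) := by
      have h1 := NormedSpace.expSeries_div_hasSum_exp (-((Real.log q : ℝ) : ℂ) * z)
      have h2 : ∀ j : ℕ, (-((Real.log q : ℝ) : ℂ) * z) ^ j / (Nat.factorial j : ℂ)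
          = ((-1)^j / (Nat.factorial j : ℂ)) * (Real.log q : ℂ)^j * z ^ j := by
        intro j
        ring
      simp only [h2] at h1
      have h3 : NormedSpace.exp (-((Real.log q : ℝ) : ℂ) * z) = (q:ℂ) ^ (-s) * q := by
        rw [← Complex.exp_eq_exp_ℂ]
        have hlog : Complex.log (q : ℂ) = ((Real.log q : ℝ) : ℂ) := by
          rw [← Complex.ofReal_natCast, ← Complex.ofReal_log (Nat.cast_nonneg q)]
        rw [Complex.cpow_def_of_ne_zero hq0, hlog]
        conv_rhs => rw [show ((q:ℂ)) = Complex.exp (Complex.log q) from (Complex.exp_log hq0).symm,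
          hlog]
        rw [← Complex.exp_add]
        congr 1
        rw [hsdef]
        ring
      rwa [h3] at h1
    have hD : ∀ a ∈ Finset.Icc 1 q, HasSum (fun m => (∑ j ∈ Finset.range (m + 1),
          ((-1)^j / (Nat.factorial j : ℂ)) * (Real.log q : ℂ)^j * γH a (m - j)) * z ^ m)
        ((q:ℂ) ^ (-s) * q * (HurwitzZeta.hurwitzZeta ((a / q : ℝ) : UnitAddCircle) s - 1 / z)) := by
      intro a ha
      have hf : Summable (fun j =>
          ‖((-1)^j / (Nat.factorial j : ℂ)) * (Real.log q : ℂ)^j * z ^ j‖) := by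
        have heq : ∀ j : ℕ, ‖((-1)^j / (Nat.factorial j : ℂ)) * (Real.log q : ℂ)^j * z ^ j‖
            = (|Real.log q| * ‖z‖) ^ j / (Nat.factorial j : ℝ) := by
          intro j
          rw [norm_mul, norm_mul, norm_div, norm_pow, norm_pow, norm_pow, norm_neg, norm_one,
            one_pow, Complex.norm_real, Real.norm_eq_abs, Complex.norm_natCast, mul_pow]
          ring
        exact (summable_congr heq).mpr (Real.summable_pow_div_factorial _)
      have h := hasSum_sum_range_mul_of_summable_norm hf (hBsum a ha)
      rw [hC.tsum_eq, (hB a ha).tsum_eq] at h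
      have hfun : (fun m => ∑ k ∈ Finset.range (m + 1),
            (((-1)^k / (Nat.factorial k : ℂ)) * (Real.log q : ℂ)^k * z ^ k) *
              (γH a (m - k) * z ^ (m - k)))
          = fun m => (∑ j ∈ Finset.range (m + 1),
            ((-1)^j / (Nat.factorial j : ℂ)) * (Real.log q : ℂ)^j * γH a (m - j)) * z ^ m := by
        funext m
        rw [Finset.sum_mul]
        refine Finset.sum_congr rfl fun j hj => ?_
        have hj' : j ≤ m := Nat.lt_succ_iff.mp (Finset.mem_range.mp hj)
        have hzz : z ^ j * z ^ (m - j) = z ^ m := by rw [← pow_add, Nat.add_sub_cancel' hj']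
        rw [← hzz]
        ring
      rw [hfun] at h
      exact h
    have hsum1 := hasSum_sum (f := fun (a : ℕ) (m : ℕ) => χ (a : ZMod q) *
        ((∑ j ∈ Finset.range (m + 1),
          ((-1)^j / (Nat.factorial j : ℂ)) * (Real.log q : ℂ)^j * γH a (m - j)) * z ^ m))
      (fun a (ha : a ∈ Finset.Icc 1 q) => (hD a ha).mul_left (χ (a : ZMod q)))
    have hE : HasSum (fun m => c m * z ^ m) (DirichletCharacter.LFunction χ s) := by
      have h2 := hsum1.mul_left (1/q : ℂ)
      have hfun : (fun m => (1/q : ℂ) * ∑ a ∈ Finset.Icc 1 q, χ (a : ZMod q) *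
            ((∑ j ∈ Finset.range (m + 1),
              ((-1)^j / (Nat.factorial j : ℂ)) * (Real.log q : ℂ)^j * γH a (m - j)) * z ^ m))
          = fun m => c m * z ^ m := by
        funext m
        rw [hcdef]
        simp only [Finset.sum_mul, mul_assoc]
      rw [hfun] at h2
      have hval : (1/q : ℂ) * ∑ a ∈ Finset.Icc 1 q, χ (a : ZMod q) *
            ((q:ℂ) ^ (-s) * q * (HurwitzZeta.hurwitzZeta ((a / q : ℝ) : UnitAddCircle) s - 1 / z))
          = DirichletCharacter.LFunction χ s := by
        have hlf : DirichletCharacter.LFunction χ s =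
            (q:ℂ) ^ (-s) * ∑ x : ZMod q, χ x * HurwitzZeta.hurwitzZeta (ZMod.toAddCircle x) s :=
          rfl
        have hsum0 : ∑ a ∈ Finset.Icc 1 q, χ (a : ZMod q) = 0 := by
          rw [sum_Icc_eq q (fun x => χ x)]
          exact MulChar.sum_eq_zero_of_ne_one hχ
        have hsumH : ∑ a ∈ Finset.Icc 1 q,
              χ (a : ZMod q) * HurwitzZeta.hurwitzZeta ((a / q : ℝ) : UnitAddCircle) s
            = ∑ x : ZMod q, χ x * HurwitzZeta.hurwitzZeta (ZMod.toAddCircle x) s := by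
          rw [← sum_Icc_eq q (fun x => χ x * HurwitzZeta.hurwitzZeta (ZMod.toAddCircle x) s)]
          exact Finset.sum_congr rfl fun a _ => by rw [circle_eq q a]
        calc (1/q : ℂ) * ∑ a ∈ Finset.Icc 1 q, χ (a : ZMod q) *
              ((q:ℂ) ^ (-s) * q * (HurwitzZeta.hurwitzZeta ((a / q : ℝ) : UnitAddCircle) s - 1 / z))
            = (q:ℂ) ^ (-s) * ((1/q : ℂ) * q) *
              ((∑ a ∈ Finset.Icc 1 q,
                χ (a : ZMod q) * HurwitzZeta.hurwitzZeta ((a / q : ℝ) : UnitAddCircle) s) -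
               (∑ a ∈ Finset.Icc 1 q, χ (a : ZMod q)) * (1 / z)) := by
              simp only [Finset.mul_sum, Finset.sum_mul, mul_sub, ← Finset.sum_sub_distrib]
              exact Finset.sum_congr rfl fun a _ => by ring
          _ = DirichletCharacter.LFunction χ s := by
              rw [hsum0, hsumH, hlf, one_div, inv_mul_cancel₀ hq0]
              ring
      rwa [hval] at h2
    have hAB := hA.sub hE
    rw [sub_self] at hAB
    have hfun : (fun m => (γχ m - c m) * z ^ m) = fun m => γχ m * z ^ m - c m * z ^ m :=
      funext fun m => sub_mul _ _ _
    rw [hfun]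
    exact hAB
  have hkey := congrFun key n
  simp only [Pi.zero_apply, sub_eq_zero] at hkey
  exact hkey
end
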